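/- arXiv:1911.05194 — 3 statements merged into one kernel-verified Lean document; each statement's English description precedes it below -/
import Mathlib

section
/- Let 0 < r₁ < r₂ < ∞ and let u : [r₁,r₂] × ℝ → ℝ be continuous, 2π-periodic in the second variable, C² on the interior, satisfying the polar Laplace equation u_rr + (1/r)u_r + (1/r²)u_θθ = 0 on (r₁,r₂) × ℝ, and with ∫₀^{2π} u_r(√(r₁r₂), τ) dτ = 0. Define U(r,θ) = ∫_{√(r₁r₂)/r}^{1} u(rρ, θ)/ρ dρ + √(r₁r₂) ∫₀^θ ( C − ∫₀^t u_r(√(r₁r₂), τ) dτ ) dt, where C = (1/(2π)) ∫₀^{2π} ∫₀^t u_r(√(r₁r₂), τ) dτ dt. Then U is 2π-periodic in θ and satisfies the polar Laplace equation U_rr + (1/r)U_r + (1/r²)U_θθ = 0 on (r₁,r₂) × ℝ, with U_r(r,θ) = u(r,θ)/r for all r ∈ (r₁,r₂). -/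
noncomputable def pd1 (f : ℝ → ℝ → ℝ) (r θ : ℝ) : ℝ := deriv (fun s => f s θ) r
noncomputable def pd2 (f : ℝ → ℝ → ℝ) (r θ : ℝ) : ℝ := deriv (fun t => f r t) θ

theorem stmt4 (r₁ r₂ : ℝ) (h1 : 0 < r₁) (h2 : r₁ < r₂)
    (u : ℝ → ℝ → ℝ)
    (hcont : ContinuousOn (fun p : ℝ × ℝ => u p.1 p.2) (Set.Icc r₁ r₂ ×ˢ (Set.univ : Set ℝ)))
    (hper : ∀ r θ : ℝ, u r (θ + 2 * Real.pi) = u r θ)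
    (hC2 : ContDiffOn ℝ 2 (fun p : ℝ × ℝ => u p.1 p.2) (Set.Ioo r₁ r₂ ×ˢ (Set.univ : Set ℝ)))
    (hlap : ∀ r θ : ℝ, r ∈ Set.Ioo r₁ r₂ →
      pd1 (pd1 u) r θ + (1 / r) * pd1 u r θ + (1 / r ^ 2) * pd2 (pd2 u) r θ = 0)
    (hzero : (∫ τ in (0:ℝ)..(2 * Real.pi), pd1 u (Real.sqrt (r₁ * r₂)) τ) = 0)
    (C : ℝ)
    (hC : C = (1 / (2 * Real.pi)) * ∫ t in (0:ℝ)..(2 * Real.pi),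
        (∫ τ in (0:ℝ)..t, pd1 u (Real.sqrt (r₁ * r₂)) τ))
    (U : ℝ → ℝ → ℝ)
    (hU : ∀ r θ : ℝ, U r θ = (∫ ρ in (Real.sqrt (r₁ * r₂) / r)..1, u (r * ρ) θ / ρ)
        + Real.sqrt (r₁ * r₂) * ∫ t in (0:ℝ)..θ,
            (C - ∫ τ in (0:ℝ)..t, pd1 u (Real.sqrt (r₁ * r₂)) τ)) :
    (∀ r ∈ Set.Icc r₁ r₂, ∀ θ : ℝ, U r (θ + 2 * Real.pi) = U r θ) ∧
    (∀ r θ : ℝ, r ∈ Set.Ioo r₁ r₂ →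
      pd1 (pd1 U) r θ + (1 / r) * pd1 U r θ + (1 / r ^ 2) * pd2 (pd2 U) r θ = 0) ∧
    (∀ r θ : ℝ, r ∈ Set.Ioo r₁ r₂ → pd1 U r θ = u r θ / r) := by
  have hπ := Real.pi_pos
  set a := Real.sqrt (r₁ * r₂) with ha_def
  have hr₂ : (0:ℝ) < r₂ := h1.trans h2
  have ha2 : a ^ 2 = r₁ * r₂ := Real.sq_sqrt (by positivity)
  have ha_pos : 0 < a := Real.sqrt_pos.2 (by positivity)
  have haI : a ∈ Set.Ioo r₁ r₂ := by
    constructor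
    · nlinarith
    · nlinarith
  -- the open strip
  set S : Set (ℝ × ℝ) := Set.Ioo r₁ r₂ ×ˢ (Set.univ : Set ℝ) with hS_def
  have hS : IsOpen S := isOpen_Ioo.prod isOpen_univ
  have mem_S : ∀ {r θ : ℝ}, r ∈ Set.Ioo r₁ r₂ → ((r, θ) : ℝ × ℝ) ∈ S :=
    fun hr => ⟨hr, trivial⟩
  have hposIoo : ∀ {s : ℝ}, s ∈ Set.Ioo r₁ r₂ → 0 < s := fun hs => h1.trans hs.1
  have hposIcc : ∀ {s : ℝ}, s ∈ Set.Icc r₁ r₂ → 0 < s := fun hs => lt_of_lt_of_le h1 hs.1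
  -- abbreviation for the full function
  have hfd : ∀ p ∈ S, DifferentiableAt ℝ (fun p : ℝ × ℝ => u p.1 p.2) p := fun p hp =>
    (hC2.contDiffAt (hS.mem_nhds hp)).differentiableAt two_ne_zero
  set g : ℝ × ℝ → (ℝ × ℝ) →L[ℝ] ℝ := fderiv ℝ (fun p : ℝ × ℝ => u p.1 p.2) with hg_def
  have hg : ContDiffOn ℝ 1 g S := hC2.fderiv_of_isOpen hS (by norm_num)
  have hline1 : ∀ (θ r : ℝ), HasDerivAt (fun s : ℝ => ((s, θ) : ℝ × ℝ)) (1, 0) r :=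
    fun θ r => (hasDerivAt_id r).prodMk (hasDerivAt_const r θ)
  have hline2 : ∀ (r θ : ℝ), HasDerivAt (fun t : ℝ => ((r, t) : ℝ × ℝ)) (0, 1) θ :=
    fun r θ => (hasDerivAt_const θ r).prodMk (hasDerivAt_id θ)
  -- first derivatives
  have key1 : ∀ r θ : ℝ, r ∈ Set.Ioo r₁ r₂ →
      HasDerivAt (fun s => u s θ) (g (r, θ) (1, 0)) r := by
    intro r θ hr
    have h : HasDerivAt ((fun p : ℝ × ℝ => u p.1 p.2) ∘ (fun s : ℝ => (s, θ)))
        (g (r, θ) (1, 0)) r :=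
      HasFDerivAt.comp_hasDerivAt r (hfd (r, θ) (mem_S hr)).hasFDerivAt (hline1 θ r)
    exact h
  have key2 : ∀ r θ : ℝ, r ∈ Set.Ioo r₁ r₂ →
      HasDerivAt (fun t => u r t) (g (r, θ) (0, 1)) θ := by
    intro r θ hr
    have h : HasDerivAt ((fun p : ℝ × ℝ => u p.1 p.2) ∘ (fun t : ℝ => (r, t)))
        (g (r, θ) (0, 1)) θ :=
      HasFDerivAt.comp_hasDerivAt θ (hfd (r, θ) (mem_S hr)).hasFDerivAt (hline2 r θ)
    exact h
  have hpd1 : ∀ r θ : ℝ, r ∈ Set.Ioo r₁ r₂ → pd1 u r θ = g (r, θ) (1, 0) :=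
    fun r θ hr => (key1 r θ hr).deriv
  have hpd2 : ∀ r θ : ℝ, r ∈ Set.Ioo r₁ r₂ → pd2 u r θ = g (r, θ) (0, 1) :=
    fun r θ hr => (key2 r θ hr).deriv
  have hud1 : ∀ r θ : ℝ, r ∈ Set.Ioo r₁ r₂ →
      HasDerivAt (fun s => u s θ) (pd1 u r θ) r := by
    intro r θ hr; rw [hpd1 r θ hr]; exact key1 r θ hr
  have hud2 : ∀ r θ : ℝ, r ∈ Set.Ioo r₁ r₂ →
      HasDerivAt (fun t => u r t) (pd2 u r θ) θ := by
    intro r θ hr; rw [hpd2 r θ hr]; exact key2 r θ hr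
  -- second derivatives
  set g1 : ℝ × ℝ → ℝ := fun p => g p (1, 0) with hg1_def
  set g2 : ℝ × ℝ → ℝ := fun p => g p (0, 1) with hg2_def
  have hg1 : ContDiffOn ℝ 1 g1 S :=
    (ContinuousLinearMap.apply ℝ ℝ ((1:ℝ), (0:ℝ))).contDiff.comp_contDiffOn hg
  have hg2 : ContDiffOn ℝ 1 g2 S :=
    (ContinuousLinearMap.apply ℝ ℝ ((0:ℝ), (1:ℝ))).contDiff.comp_contDiffOn hg
  have key11 : ∀ r θ : ℝ, r ∈ Set.Ioo r₁ r₂ →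
      HasDerivAt (fun s => pd1 u s θ) (fderiv ℝ g1 (r, θ) (1, 0)) r := by
    intro r θ hr
    have hdiff : DifferentiableAt ℝ g1 (r, θ) :=
      (hg1.contDiffAt (hS.mem_nhds (mem_S hr))).differentiableAt one_ne_zero
    have h : HasDerivAt (g1 ∘ (fun s : ℝ => (s, θ))) (fderiv ℝ g1 (r, θ) (1, 0)) r :=
      HasFDerivAt.comp_hasDerivAt r hdiff.hasFDerivAt (hline1 θ r)
    apply h.congr_of_eventuallyEq
    filter_upwards [isOpen_Ioo.mem_nhds hr] with s hs
    exact hpd1 s θ hs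
  have key22 : ∀ r θ : ℝ, r ∈ Set.Ioo r₁ r₂ →
      HasDerivAt (fun t => pd2 u r t) (fderiv ℝ g2 (r, θ) (0, 1)) θ := by
    intro r θ hr
    have hdiff : DifferentiableAt ℝ g2 (r, θ) :=
      (hg2.contDiffAt (hS.mem_nhds (mem_S hr))).differentiableAt one_ne_zero
    have h : HasDerivAt (g2 ∘ (fun t : ℝ => (r, t))) (fderiv ℝ g2 (r, θ) (0, 1)) θ :=
      HasFDerivAt.comp_hasDerivAt θ hdiff.hasFDerivAt (hline2 r θ)
    apply h.congr_of_eventuallyEq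
    apply Filter.Eventually.of_forall
    intro t
    exact hpd2 r t hr
  have hpd11 : ∀ r θ : ℝ, r ∈ Set.Ioo r₁ r₂ →
      pd1 (pd1 u) r θ = fderiv ℝ g1 (r, θ) (1, 0) := fun r θ hr => (key11 r θ hr).deriv
  have hpd22 : ∀ r θ : ℝ, r ∈ Set.Ioo r₁ r₂ →
      pd2 (pd2 u) r θ = fderiv ℝ g2 (r, θ) (0, 1) := fun r θ hr => (key22 r θ hr).deriv
  have hud11 : ∀ r θ : ℝ, r ∈ Set.Ioo r₁ r₂ →
      HasDerivAt (fun s => pd1 u s θ) (pd1 (pd1 u) r θ) r := by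
    intro r θ hr; rw [hpd11 r θ hr]; exact key11 r θ hr
  have hud22 : ∀ r θ : ℝ, r ∈ Set.Ioo r₁ r₂ →
      HasDerivAt (fun t => pd2 u r t) (pd2 (pd2 u) r θ) θ := by
    intro r θ hr; rw [hpd22 r θ hr]; exact key22 r θ hr
  -- joint continuity of partial derivatives
  have hgc : ContinuousOn g S := hg.continuousOn
  have hc1 : ContinuousOn (fun p : ℝ × ℝ => pd1 u p.1 p.2) S := by
    apply ContinuousOn.congr
      ((ContinuousLinearMap.apply ℝ ℝ ((1:ℝ), (0:ℝ))).continuous.comp_continuousOn hgc)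
    intro p hp
    exact hpd1 p.1 p.2 hp.1
  have hc2 : ContinuousOn (fun p : ℝ × ℝ => pd2 u p.1 p.2) S := by
    apply ContinuousOn.congr
      ((ContinuousLinearMap.apply ℝ ℝ ((0:ℝ), (1:ℝ))).continuous.comp_continuousOn hgc)
    intro p hp
    exact hpd2 p.1 p.2 hp.1
  have hgd2 : ContinuousOn (fun p => fderiv ℝ g2 p) S :=
    hg2.continuousOn_fderiv_of_isOpen hS le_rfl
  have hc22 : ContinuousOn (fun p : ℝ × ℝ => pd2 (pd2 u) p.1 p.2) S := by
    apply ContinuousOn.congr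
      ((ContinuousLinearMap.apply ℝ ℝ ((0:ℝ), (1:ℝ))).continuous.comp_continuousOn hgd2)
    intro p hp
    exact hpd22 p.1 p.2 hp.1
  -- continuity of θ ↦ pd1 u r θ for fixed r in the interior
  have hsliceθ : ∀ r : ℝ, r ∈ Set.Ioo r₁ r₂ → Continuous (fun t => pd1 u r t) := by
    intro r hr
    exact hc1.comp_continuous (continuous_const.prodMk continuous_id) (fun t => mem_S hr)
  -- periodicity of pd1 u a
  have hupint : ∀ t₁ t₂ : ℝ, IntervalIntegrable (fun τ => pd1 u a τ) MeasureTheory.volume t₁ t₂ :=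
    fun t₁ t₂ => ((hsliceθ a haI).intervalIntegrable t₁ t₂)
  have huper : Function.Periodic (fun τ => pd1 u a τ) (2 * Real.pi) := by
    intro t
    show deriv (fun s => u s (t + 2 * Real.pi)) a = deriv (fun s => u s t) a
    congr 1
    funext s
    exact hper s t
  have hFadd : ∀ t : ℝ, (∫ τ in (0:ℝ)..(t + 2 * Real.pi), pd1 u a τ)
      = ∫ τ in (0:ℝ)..t, pd1 u a τ := by
    intro t
    have h1' := intervalIntegral.integral_add_adjacent_intervals (hupint 0 t)
      (hupint t (t + 2 * Real.pi))
    have h2' : (∫ τ in t..(t + 2 * Real.pi), pd1 u a τ)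
        = ∫ τ in (0:ℝ)..((0:ℝ) + 2 * Real.pi), pd1 u a τ := huper.intervalIntegral_add_eq t 0
    rw [← h1', h2', zero_add, hzero, add_zero]
  -- F is continuous
  have hFc : Continuous (fun t => ∫ τ in (0:ℝ)..t, pd1 u a τ) :=
    intervalIntegral.continuous_primitive hupint 0
  have hCFc : Continuous (fun t => C - ∫ τ in (0:ℝ)..t, pd1 u a τ) := continuous_const.sub hFc
  have hCFint : ∀ t₁ t₂ : ℝ, IntervalIntegrable
      (fun t => C - ∫ τ in (0:ℝ)..t, pd1 u a τ) MeasureTheory.volume t₁ t₂ :=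
    fun t₁ t₂ => hCFc.intervalIntegrable t₁ t₂
  have hCFper : Function.Periodic (fun t => C - ∫ τ in (0:ℝ)..t, pd1 u a τ) (2 * Real.pi) := by
    intro t
    simp only [hFadd t]
  have hCFzero : (∫ t in (0:ℝ)..(2 * Real.pi), (C - ∫ τ in (0:ℝ)..t, pd1 u a τ)) = 0 := by
    rw [intervalIntegral.integral_sub (intervalIntegrable_const) (hFc.intervalIntegrable 0 _),
      intervalIntegral.integral_const, hC]
    have h2π : (2 * Real.pi) ≠ 0 := by positivity
    rw [sub_zero, smul_eq_mul]
    field_simp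
    ring
  have hGper : ∀ θ : ℝ, (∫ t in (0:ℝ)..(θ + 2 * Real.pi), (C - ∫ τ in (0:ℝ)..t, pd1 u a τ))
      = ∫ t in (0:ℝ)..θ, (C - ∫ τ in (0:ℝ)..t, pd1 u a τ) := by
    intro θ
    have h1' := intervalIntegral.integral_add_adjacent_intervals (hCFint 0 θ)
      (hCFint θ (θ + 2 * Real.pi))
    have h2' := hCFper.intervalIntegral_add_eq θ 0
    rw [← h1', h2', zero_add, hCFzero, add_zero]
  -- substitution: U in terms of V
  have hsub : ∀ r : ℝ, 0 < r → ∀ θ : ℝ,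
      (∫ ρ in (a / r)..1, u (r * ρ) θ / ρ) = ∫ s in a..r, u s θ / s := by
    intro r hr θ
    have h0 : (∫ ρ in (a / r)..1, u (r * ρ) θ / ρ)
        = ∫ ρ in (a / r)..1, r * (u (r * ρ) θ / (r * ρ)) := by
      apply intervalIntegral.integral_congr
      intro ρ _
      rcases eq_or_ne ρ 0 with rfl | hρ
      · simp
      · field_simp
    rw [h0, intervalIntegral.integral_const_mul,
      intervalIntegral.integral_comp_mul_left (fun s => u s θ / s) hr.ne',
      show r * (a / r) = a by field_simp, mul_one, smul_eq_mul, ← mul_assoc,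
      mul_inv_cancel₀ hr.ne', one_mul]
  have hUeq : ∀ r : ℝ, 0 < r → ∀ θ : ℝ,
      U r θ = (∫ s in a..r, u s θ / s)
        + a * ∫ t in (0:ℝ)..θ, (C - ∫ τ in (0:ℝ)..t, pd1 u a τ) := by
    intro r hr θ
    rw [hU r θ, hsub r hr θ]
  -- continuity of slices of u
  have hUcontSlice : ∀ θ : ℝ, ContinuousOn (fun s => u s θ / s) (Set.Icc r₁ r₂) := by
    intro θ
    have hcs : ContinuousOn (fun s => u s θ) (Set.Icc r₁ r₂) :=
      hcont.comp (Continuous.continuousOn (continuous_id.prodMk continuous_const))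
        (fun s hs => ⟨hs, trivial⟩)
    exact hcs.div continuousOn_id (fun s hs => (hposIcc hs).ne')
  have hVint : ∀ (θ r : ℝ), r ∈ Set.Icc r₁ r₂ →
      IntervalIntegrable (fun s => u s θ / s) MeasureTheory.volume a r := by
    intro θ r hr
    apply ContinuousOn.intervalIntegrable
    exact (hUcontSlice θ).mono (Set.ordConnected_Icc.uIcc_subset
      (Set.Ioo_subset_Icc_self haI) hr)
  -- the fundamental derivative in r
  have hUr : ∀ r θ : ℝ, r ∈ Set.Ioo r₁ r₂ → HasDerivAt (fun s => U s θ) (u r θ / r) r := by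
    intro r θ hr
    have hmeas : StronglyMeasurableAtFilter (fun s => u s θ / s) (nhds r) MeasureTheory.volume :=
      (ContinuousOn.stronglyMeasurableAtFilter isOpen_Ioo
        ((hUcontSlice θ).mono Set.Ioo_subset_Icc_self)) r hr
    have hcontAt : ContinuousAt (fun s => u s θ / s) r :=
      (hUcontSlice θ).continuousAt (Icc_mem_nhds hr.1 hr.2)
    have hFTC := intervalIntegral.integral_hasDerivAt_right
      (hVint θ r (Set.Ioo_subset_Icc_self hr)) hmeas hcontAt
    have hFTC' := hFTC.add_const
      (a * ∫ t in (0:ℝ)..θ, (C - ∫ τ in (0:ℝ)..t, pd1 u a τ))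
    apply hFTC'.congr_of_eventuallyEq
    filter_upwards [isOpen_Ioo.mem_nhds hr] with s hs
    exact hUeq s (hposIoo hs) θ
  have hpart3 : ∀ r θ : ℝ, r ∈ Set.Ioo r₁ r₂ → pd1 U r θ = u r θ / r :=
    fun r θ hr => (hUr r θ hr).deriv
  refine ⟨?_, ?_, hpart3⟩
  · -- periodicity
    intro r _ θ
    rw [hU r (θ + 2 * Real.pi), hU r θ]
    congr 1
    · apply intervalIntegral.integral_congr
      intro ρ _
      simp only [hper]
    · rw [hGper θ]
  · -- the Laplace equation
    intro r θ hr
    have hr0 : 0 < r := hposIoo hr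
    have hsub1 : Set.uIcc a r ⊆ Set.Ioo r₁ r₂ := Set.ordConnected_Ioo.uIcc_subset haI hr
    -- pd1 pd1 U
    have e1 : pd1 (pd1 U) r θ = deriv (fun s => u s θ / s) r := by
      show deriv (fun s => pd1 U s θ) r = _
      apply Filter.EventuallyEq.deriv_eq
      filter_upwards [isOpen_Ioo.mem_nhds hr] with s hs
      exact hpart3 s θ hs
    have hdiv : HasDerivAt (fun s => u s θ / s) ((pd1 u r θ * r - u r θ) / r ^ 2) r := by
      have h := (hud1 r θ hr).div (hasDerivAt_id r) (show id r ≠ 0 from hr0.ne')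
      simpa [Pi.div_def] using h
    have e1' : pd1 (pd1 U) r θ = (pd1 u r θ * r - u r θ) / r ^ 2 := e1.trans hdiv.deriv
    -- differentiation under the integral sign
    have hDD : ∀ (φ ψ : ℝ → ℝ → ℝ),
        ContinuousOn (fun p : ℝ × ℝ => φ p.1 p.2) S →
        ContinuousOn (fun p : ℝ × ℝ => ψ p.1 p.2) S →
        (∀ s t : ℝ, s ∈ Set.Ioo r₁ r₂ → HasDerivAt (fun t' => φ s t') (ψ s t) t) →
        ∀ θ₀ : ℝ, HasDerivAt (fun t => ∫ s in a..r, φ s t / s)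
          (∫ s in a..r, ψ s θ₀ / s) θ₀ := by
      intro φ ψ hφ hψ hd θ₀
      have hKS : (Set.uIcc a r ×ˢ Set.Icc (θ₀ - 1) (θ₀ + 1) : Set (ℝ × ℝ)) ⊆ S :=
        fun p hp => ⟨hsub1 hp.1, trivial⟩
      have hK : IsCompact (Set.uIcc a r ×ˢ Set.Icc (θ₀ - 1) (θ₀ + 1)) :=
        isCompact_uIcc.prod isCompact_Icc
      have hψK : ContinuousOn (fun p : ℝ × ℝ => ψ p.1 p.2 / p.1)
          (Set.uIcc a r ×ˢ Set.Icc (θ₀ - 1) (θ₀ + 1)) :=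
        ((hψ.mono hKS).div (continuous_fst.continuousOn)
          (fun p hp => (hposIoo (hsub1 hp.1)).ne'))
      obtain ⟨M, hM⟩ := hK.exists_bound_of_continuousOn hψK
      have hφslice : ∀ t : ℝ, ContinuousOn (fun s => φ s t / s) (Set.uIcc a r) := by
        intro t
        exact ((hφ.comp (Continuous.continuousOn (continuous_id.prodMk continuous_const))
          (fun s hs => mem_S (hsub1 hs))).div continuousOn_id
          (fun s hs => (hposIoo (hsub1 hs)).ne'))
      have hψslice : ∀ t : ℝ, ContinuousOn (fun s => ψ s t / s) (Set.uIcc a r) := by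
        intro t
        exact ((hψ.comp (Continuous.continuousOn (continuous_id.prodMk continuous_const))
          (fun s hs => mem_S (hsub1 hs))).div continuousOn_id
          (fun s hs => (hposIoo (hsub1 hs)).ne'))
      have hball : ∀ x : ℝ, x ∈ Metric.ball θ₀ 1 → x ∈ Set.Icc (θ₀ - 1) (θ₀ + 1) := by
        intro x hx
        have := Real.dist_eq x θ₀ ▸ Metric.mem_ball.1 hx
        have h' := abs_lt.1 this
        constructor <;> linarith [h'.1, h'.2]
      refine (intervalIntegral.hasDerivAt_integral_of_dominated_loc_of_deriv_le
        (F := fun t s => φ s t / s) (F' := fun t s => ψ s t / s) (bound := fun _ => M)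
        (Metric.ball_mem_nhds θ₀ one_pos) ?_ ?_ ?_ ?_ ?_ ?_).2
      · exact Filter.Eventually.of_forall fun t =>
          ((hφslice t).mono Set.uIoc_subset_uIcc).aestronglyMeasurable measurableSet_uIoc
      · exact (hφslice θ₀).intervalIntegrable
      · exact ((hψslice θ₀).mono Set.uIoc_subset_uIcc).aestronglyMeasurable measurableSet_uIoc
      · apply Filter.Eventually.of_forall
        intro s hs x hx
        exact hM (s, x) ⟨Set.uIoc_subset_uIcc hs, hball x hx⟩
      · exact intervalIntegrable_const
      · apply Filter.Eventually.of_forall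
        intro s hs x _
        exact (hd s x (hsub1 (Set.uIoc_subset_uIcc hs))).div_const s
    have hVder : ∀ t : ℝ, HasDerivAt (fun t' => ∫ s in a..r, u s t' / s)
        (∫ s in a..r, pd2 u s t / s) t :=
      hDD u (pd2 u)
        (hcont.mono (Set.prod_mono Set.Ioo_subset_Icc_self subset_rfl))
        hc2 (fun s t hs => hud2 s t hs)
    have hPder : ∀ t : ℝ, HasDerivAt (fun t' => ∫ s in a..r, pd2 u s t' / s)
        (∫ s in a..r, pd2 (pd2 u) s t / s) t :=
      hDD (pd2 u) (pd2 (pd2 u)) hc2 hc22 (fun s t hs => hud22 s t hs)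
    -- the primitive G
    have hGder : ∀ t : ℝ, HasDerivAt
        (fun t' => ∫ x in (0:ℝ)..t', (C - ∫ τ in (0:ℝ)..x, pd1 u a τ))
        (C - ∫ τ in (0:ℝ)..t, pd1 u a τ) t := by
      intro t
      exact intervalIntegral.integral_hasDerivAt_right (hCFint 0 t)
        (hCFc.stronglyMeasurableAtFilter _ _) hCFc.continuousAt
    have hFder : ∀ t : ℝ, HasDerivAt (fun x => ∫ τ in (0:ℝ)..x, pd1 u a τ)
        (pd1 u a t) t := by
      intro t
      exact intervalIntegral.integral_hasDerivAt_right (hupint 0 t)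
        ((hsliceθ a haI).stronglyMeasurableAtFilter _ _) (hsliceθ a haI).continuousAt
    -- pd2 U
    have hpd2U : ∀ t : ℝ, pd2 U r t = (∫ s in a..r, pd2 u s t / s)
        + a * (C - ∫ τ in (0:ℝ)..t, pd1 u a τ) := by
      intro t
      have h := (hVder t).add ((hGder t).const_mul a)
      have h' : HasDerivAt (fun t' => U r t')
          ((∫ s in a..r, pd2 u s t / s) + a * (C - ∫ τ in (0:ℝ)..t, pd1 u a τ)) t :=
        h.congr_of_eventuallyEq (Filter.Eventually.of_forall fun t' => hUeq r hr0 t')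
      exact h'.deriv
    -- integral of pd2 pd2 u via the Laplace equation
    have hIψ : (∫ s in a..r, pd2 (pd2 u) s θ / s) = a * pd1 u a θ - r * pd1 u r θ := by
      have hderiv : ∀ s ∈ Set.uIcc a r,
          HasDerivAt (fun s' => -(s' * pd1 u s' θ)) (pd2 (pd2 u) s θ / s) s := by
        intro s hs
        have hsIoo := hsub1 hs
        have hs0 : (s : ℝ) ≠ 0 := (hposIoo hsIoo).ne'
        have h : HasDerivAt (fun s' => -(s' * pd1 u s' θ))
            (-(1 * pd1 u s θ + s * pd1 (pd1 u) s θ)) s :=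
          ((hasDerivAt_id' (x := s)).mul (hud11 s θ hsIoo)).neg
        convert h using 1
        have hl := hlap s θ hsIoo
        have hl0 : s * (s ^ 2 * pd1 (pd1 u) s θ + s * pd1 u s θ + pd2 (pd2 u) s θ) = 0 := by
          field_simp at hl
          linear_combination s * hl
        have hl' := (mul_eq_zero.1 hl0).resolve_left hs0
        have hψval : pd2 (pd2 u) s θ
            = -(s ^ 2 * pd1 (pd1 u) s θ) - s * pd1 u s θ := by linarith
        rw [hψval]
        field_simp
        ring
      have hint : IntervalIntegrable (fun s => pd2 (pd2 u) s θ / s) MeasureTheory.volume a r := by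
        apply ContinuousOn.intervalIntegrable
        exact ((hc22.comp (Continuous.continuousOn (continuous_id.prodMk continuous_const))
          (fun s hs => mem_S (hsub1 hs))).div continuousOn_id
          (fun s hs => (hposIoo (hsub1 hs)).ne'))
      rw [intervalIntegral.integral_eq_sub_of_hasDerivAt hderiv hint]
      ring
    have e3 : pd2 (pd2 U) r θ = -(r * pd1 u r θ) := by
      have h2 := (hPder θ).add (((hFder θ).const_sub C).const_mul a)
      have h3 : HasDerivAt (fun t => pd2 U r t)
          ((∫ s in a..r, pd2 (pd2 u) s θ / s) + a * -(pd1 u a θ)) θ :=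
        h2.congr_of_eventuallyEq (Filter.Eventually.of_forall fun t => hpd2U t)
      have := h3.deriv
      show deriv (fun t => pd2 U r t) θ = _
      rw [this, hIψ]
      ring
    rw [e1', hpart3 r θ hr, e3]
    field_simp
    ring
end

section
/- Let 0 < r₁ < r₂ < ∞ and let U be a solution of the Neumann problem on the annulus in polar coordinates: U ∈ C²((r₁,r₂)×ℝ) ∩ C¹([r₁,r₂]×ℝ), 2π-periodic in θ, satisfying U_rr + (1/r)U_r + (1/r²)U_θθ = 0 on (r₁,r₂)×ℝ, with U_r(r,θ) = φ(r,θ)/r on {r₁,r₂}×ℝ, where φ is continuous, 2π-periodic in θ. Then u(r,θ) = r·U_r(r,θ) is the solution of the Dirichlet problem for the polar Laplace equation on (r₁,r₂)×ℝ with boundary values u = φ on {r₁,r₂}×ℝ. -/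
open Set Complex

lemma key (r₁ r₂ : ℝ) (h1 : 0 < r₁) (h2 : r₁ < r₂) (U : ℝ → ℝ → ℝ)
    (hC2 : ContDiffOn ℝ 2 (fun p : ℝ × ℝ => U p.1 p.2) (Set.Ioo r₁ r₂ ×ˢ (Set.univ : Set ℝ)))
    (hlap : ∀ r θ : ℝ, r ∈ Set.Ioo r₁ r₂ →
      pd1 (pd1 U) r θ + (1 / r) * pd1 U r θ + (1 / r ^ 2) * pd2 (pd2 U) r θ = 0) :
    ∃ f : ℂ → ℂ, DifferentiableOn ℂ f {z : ℂ | Real.log r₁ < z.re ∧ z.re < Real.log r₂} ∧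
      ∀ s t : ℝ, s ∈ Set.Ioo r₁ r₂ →
        (f (↑(Real.log s) + ↑t * Complex.I)).re = s * pd1 U s t := by
  have hΩ : IsOpen (Set.Ioo r₁ r₂ ×ˢ (Set.univ : Set ℝ)) := IsOpen.prod isOpen_Ioo isOpen_univ
  set Ω : Set (ℝ × ℝ) := Set.Ioo r₁ r₂ ×ˢ (Set.univ : Set ℝ) with hΩdef
  set P : ℝ × ℝ → ℝ := fun p => U p.1 p.2 with hPdef
  set A : ℝ × ℝ → (ℝ × ℝ →L[ℝ] ℝ) := fderiv ℝ P with hAdef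
  set H : ℝ × ℝ → (ℝ × ℝ →L[ℝ] (ℝ × ℝ →L[ℝ] ℝ)) := fderiv ℝ A with hHdef
  have hmem : ∀ {r θ : ℝ}, r ∈ Set.Ioo r₁ r₂ → ((r, θ) : ℝ × ℝ) ∈ Ω := by
    intro r θ hr; exact Set.mem_prod.mpr ⟨hr, trivial⟩
  have hPd : ∀ q ∈ Ω, HasFDerivAt P (A q) q := by
    intro q hq
    exact ((hC2.contDiffAt (hΩ.mem_nhds hq)).differentiableAt (by norm_num)).hasFDerivAt
  have hC1A : ContDiffOn ℝ 1 A Ω := hC2.fderiv_of_isOpen hΩ (by norm_num)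
  have hAd : ∀ q ∈ Ω, HasFDerivAt A (H q) q := by
    intro q hq
    exact ((hC1A.contDiffAt (hΩ.mem_nhds hq)).differentiableAt (by norm_num)).hasFDerivAt
  have hsymm : ∀ q ∈ Ω, ∀ v w, H q v w = H q w v := by
    intro q hq v w
    have hev : ∀ᶠ y in nhds q, HasFDerivAt P (A y) y := by
      filter_upwards [hΩ.mem_nhds hq] with y hy using hPd y hy
    exact second_derivative_symmetric_of_eventually hev (hAd q hq) v w
  -- directional derivatives of U
  have hU1 : ∀ r θ : ℝ, r ∈ Set.Ioo r₁ r₂ →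
      HasDerivAt (fun s => U s θ) (A (r, θ) ((1:ℝ), (0:ℝ))) r := by
    intro r θ hr
    have h := (hPd _ (hmem (θ := θ) hr)).comp_hasDerivAt r
      ((hasDerivAt_id' r).prodMk (hasDerivAt_const r θ))
    simpa [Function.comp_def] using h
  have hU2 : ∀ r θ : ℝ, r ∈ Set.Ioo r₁ r₂ →
      HasDerivAt (fun t => U r t) (A (r, θ) ((0:ℝ), (1:ℝ))) θ := by
    intro r θ hr
    have h := (hPd _ (hmem (θ := θ) hr)).comp_hasDerivAt θ
      ((hasDerivAt_const θ r).prodMk (hasDerivAt_id' θ))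
    simpa [Function.comp_def] using h
  have hpd1U : ∀ r θ : ℝ, r ∈ Set.Ioo r₁ r₂ → pd1 U r θ = A (r, θ) ((1:ℝ), (0:ℝ)) :=
    fun r θ hr => (hU1 r θ hr).deriv
  have hpd2U : ∀ r θ : ℝ, r ∈ Set.Ioo r₁ r₂ → pd2 U r θ = A (r, θ) ((0:ℝ), (1:ℝ)) :=
    fun r θ hr => (hU2 r θ hr).deriv
  -- directional derivatives of the partials
  have ha1 : ∀ r θ : ℝ, r ∈ Set.Ioo r₁ r₂ →
      HasDerivAt (fun s => A (s, θ) ((1:ℝ), (0:ℝ))) (H (r, θ) ((1:ℝ),(0:ℝ)) ((1:ℝ),(0:ℝ))) r := by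
    intro r θ hr
    have hA' := (hAd _ (hmem (θ := θ) hr)).clm_apply (hasFDerivAt_const ((1:ℝ),(0:ℝ)) ((r,θ) : ℝ × ℝ))
    have h := hA'.comp_hasDerivAt r ((hasDerivAt_id' r).prodMk (hasDerivAt_const r θ))
    simpa [Function.comp_def] using h
  have hb2 : ∀ r θ : ℝ, r ∈ Set.Ioo r₁ r₂ →
      HasDerivAt (fun t => A (r, t) ((0:ℝ), (1:ℝ))) (H (r, θ) ((0:ℝ),(1:ℝ)) ((0:ℝ),(1:ℝ))) θ := by
    intro r θ hr
    have hA' := (hAd _ (hmem (θ := θ) hr)).clm_apply (hasFDerivAt_const ((0:ℝ),(1:ℝ)) ((r,θ) : ℝ × ℝ))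
    have h := hA'.comp_hasDerivAt θ ((hasDerivAt_const θ r).prodMk (hasDerivAt_id' θ))
    simpa [Function.comp_def] using h
  -- Laplace equation in terms of A, H
  have hlap' : ∀ r θ : ℝ, r ∈ Set.Ioo r₁ r₂ →
      H (r,θ) ((1:ℝ),(0:ℝ)) ((1:ℝ),(0:ℝ)) + (1/r) * A (r,θ) ((1:ℝ),(0:ℝ))
        + (1/r^2) * H (r,θ) ((0:ℝ),(1:ℝ)) ((0:ℝ),(1:ℝ)) = 0 := by
    intro r θ hr
    have e1 : pd1 (pd1 U) r θ = H (r,θ) ((1:ℝ),(0:ℝ)) ((1:ℝ),(0:ℝ)) := by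
      have heq : (fun s => pd1 U s θ) =ᶠ[nhds r] (fun s => A (s, θ) ((1:ℝ),(0:ℝ))) := by
        filter_upwards [Ioo_mem_nhds hr.1 hr.2] with s hs using hpd1U s θ hs
      rw [pd1, heq.deriv_eq, (ha1 r θ hr).deriv]
    have e2 : pd2 (pd2 U) r θ = H (r,θ) ((0:ℝ),(1:ℝ)) ((0:ℝ),(1:ℝ)) := by
      have heq : (fun t => pd2 U r t) = (fun t => A (r, t) ((0:ℝ),(1:ℝ))) :=
        funext fun t => hpd2U r t hr
      rw [pd2, heq, (hb2 r θ hr).deriv]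
    have := hlap r θ hr
    rw [e1, e2, hpd1U r θ hr] at this
    exact this
  -- the strip
  set S : Set ℂ := {z : ℂ | Real.log r₁ < z.re ∧ z.re < Real.log r₂} with hSdef
  have hSopen : IsOpen S := by
    have : S = Complex.re ⁻¹' (Set.Ioo (Real.log r₁) (Real.log r₂)) := rfl
    rw [this]; exact isOpen_Ioo.preimage Complex.continuous_re
  set Q : ℂ → ℝ × ℝ := fun z => (Real.exp z.re, z.im) with hQdef
  have hQmem : ∀ z ∈ S, Q z ∈ Ω := by
    intro z hz
    refine Set.mem_prod.mpr ⟨⟨?_, ?_⟩, trivial⟩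
    · calc r₁ = Real.exp (Real.log r₁) := (Real.exp_log h1).symm
        _ < Real.exp z.re := Real.exp_lt_exp.mpr hz.1
    · calc Real.exp z.re < Real.exp (Real.log r₂) := Real.exp_lt_exp.mpr hz.2
        _ = r₂ := Real.exp_log (h1.trans h2)
  set f : ℂ → ℂ := fun z =>
      (Real.exp z.re * A (Q z) ((1:ℝ),(0:ℝ))) • (1:ℂ) + (-(A (Q z) ((0:ℝ),(1:ℝ)))) • Complex.I
    with hfdef
  have hfd : ∀ z ∈ S, DifferentiableAt ℂ f z := by
    intro z₀ hz₀
    have hq : Q z₀ ∈ Ω := hQmem z₀ hz₀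
    have hrIoo : Real.exp z₀.re ∈ Set.Ioo r₁ r₂ := (Set.mem_prod.mp hq).1
    have hrpos : (0:ℝ) < Real.exp z₀.re := Real.exp_pos _
    have hexp : HasFDerivAt (fun z : ℂ => Real.exp z.re)
        (Real.exp z₀.re • Complex.reCLM) z₀ :=
      (Real.hasDerivAt_exp z₀.re).comp_hasFDerivAt z₀ Complex.reCLM.hasFDerivAt
    have hQd : HasFDerivAt Q ((Real.exp z₀.re • Complex.reCLM).prod Complex.imCLM) z₀ :=
      hexp.prodMk Complex.imCLM.hasFDerivAt
    have hAQ : HasFDerivAt (fun z => A (Q z))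
        ((H (Q z₀)).comp ((Real.exp z₀.re • Complex.reCLM).prod Complex.imCLM)) z₀ :=
      (hAd (Q z₀) hq).comp z₀ hQd
    have haQ := hAQ.clm_apply (hasFDerivAt_const ((1:ℝ),(0:ℝ)) z₀)
    have hbQ := hAQ.clm_apply (hasFDerivAt_const ((0:ℝ),(1:ℝ)) z₀)
    have hg1 := hexp.mul haQ
    have hg2 := hbQ.neg
    have hf0 := (hg1.smul_const (1:ℂ)).add (hg2.smul_const Complex.I)
    set c : ℂ := ((Real.exp z₀.re * A (Q z₀) ((1:ℝ),(0:ℝ))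
        + (Real.exp z₀.re)^2 * H (Q z₀) ((1:ℝ),(0:ℝ)) ((1:ℝ),(0:ℝ)) : ℝ) : ℂ)
        + ((-(Real.exp z₀.re * H (Q z₀) ((1:ℝ),(0:ℝ)) ((0:ℝ),(1:ℝ))) : ℝ) : ℂ) * Complex.I
      with hcdef
    have hHxy : ∀ (x y : ℝ), H (Q z₀) (x, y)
        = x • H (Q z₀) ((1:ℝ),(0:ℝ)) + y • H (Q z₀) ((0:ℝ),(1:ℝ)) := by
      intro x y
      have hxy : ((x, y) : ℝ × ℝ) = x • ((1:ℝ),(0:ℝ)) + y • ((0:ℝ),(1:ℝ)) := by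
        simp [Prod.ext_iff]
      rw [hxy, map_add, map_smul, map_smul]
    have hMv : ∀ w : ℂ, fderiv ℝ f z₀ w = c * w := by
      intro w
      rw [(show HasFDerivAt f _ z₀ from hf0).fderiv]
      have hQz : Q z₀ = (Real.exp z₀.re, z₀.im) := rfl
      simp only [ContinuousLinearMap.add_apply, ContinuousLinearMap.smulRight_apply,
        ContinuousLinearMap.smul_apply, ContinuousLinearMap.coe_comp',
        ContinuousLinearMap.flip_apply, ContinuousLinearMap.zero_apply,
        ContinuousLinearMap.prod_apply, Complex.reCLM_apply, Complex.imCLM_apply,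
        ContinuousLinearMap.coe_smul', Pi.smul_apply, smul_eq_mul,
        ContinuousLinearMap.comp_apply, ContinuousLinearMap.coe_fst',
        Function.comp_apply, ContinuousLinearMap.zero_comp,
        ContinuousLinearMap.neg_apply, map_zero]
      rw [hHxy (Real.exp z₀.re * w.re) w.im]
      simp only [ContinuousLinearMap.add_apply, ContinuousLinearMap.smul_apply, smul_eq_mul]
      have hr0 : Real.exp z₀.re ≠ 0 := ne_of_gt hrpos
      have hsym12 := hsymm _ hq ((1:ℝ),(0:ℝ)) ((0:ℝ),(1:ℝ))
      have hlp := hlap' (Real.exp z₀.re) z₀.im hrIoo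
      rw [show ((Real.exp z₀.re, z₀.im) : ℝ × ℝ) = Q z₀ from rfl] at hlp
      have hH22 : H (Q z₀) ((0:ℝ),(1:ℝ)) ((0:ℝ),(1:ℝ))
          = -((Real.exp z₀.re)^2 * H (Q z₀) ((1:ℝ),(0:ℝ)) ((1:ℝ),(0:ℝ)))
            - Real.exp z₀.re * A (Q z₀) ((1:ℝ),(0:ℝ)) := by
        have h3 : (Real.exp z₀.re)^2 * (H (Q z₀) ((1:ℝ),(0:ℝ)) ((1:ℝ),(0:ℝ))
            + (1/Real.exp z₀.re) * A (Q z₀) ((1:ℝ),(0:ℝ))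
            + (1/(Real.exp z₀.re)^2) * H (Q z₀) ((0:ℝ),(1:ℝ)) ((0:ℝ),(1:ℝ)))
            = (Real.exp z₀.re)^2 * H (Q z₀) ((1:ℝ),(0:ℝ)) ((1:ℝ),(0:ℝ))
              + Real.exp z₀.re * A (Q z₀) ((1:ℝ),(0:ℝ))
              + H (Q z₀) ((0:ℝ),(1:ℝ)) ((0:ℝ),(1:ℝ)) := by
          field_simp
        have h4 := h3.symm
        rw [hlp, mul_zero] at h4
        linarith
      rw [hH22, hsym12]
      simp only [Complex.ext_iff, hcdef, Complex.add_re, Complex.add_im, Complex.mul_re,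
        Complex.mul_im, Complex.ofReal_re, Complex.ofReal_im, Complex.I_re, Complex.I_im,
        Complex.real_smul, Complex.one_re, Complex.one_im]
      constructor
      · rw [hsym12]; ring
      · rw [hsym12]; ring
    have hfL : HasFDerivAt f ((c • (1 : ℂ →L[ℂ] ℂ)).restrictScalars ℝ) z₀ := by
      have heq : (c • (1 : ℂ →L[ℂ] ℂ)).restrictScalars ℝ = fderiv ℝ f z₀ := by
        refine ContinuousLinearMap.ext fun w => ?_
        rw [hMv w]
        simp
      rw [heq]
      exact hf0.differentiableAt.hasFDerivAt
    refine ⟨c • (1 : ℂ →L[ℂ] ℂ), ?_⟩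
    show HasFDerivAt f (c • (1 : ℂ →L[ℂ] ℂ)) z₀
    exact HasFDerivAtFilter.of_isLittleO
      (by simpa using HasFDerivAtFilter.isLittleO hfL)
  refine ⟨f, fun z hz => (hfd z hz).differentiableWithinAt, ?_⟩
  intro s t hs
  have hs0 : (0:ℝ) < s := h1.trans hs.1
  have hQz : Q (↑(Real.log s) + ↑t * Complex.I) = (s, t) := by
    simp [hQdef, Real.exp_log hs0]
  have hre : ((↑(Real.log s) + ↑t * Complex.I : ℂ)).re = Real.log s := by simp
  have hfv : f (↑(Real.log s) + ↑t * Complex.I)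
      = (s * A (s,t) ((1:ℝ),(0:ℝ))) • (1:ℂ) + (-(A (s,t) ((0:ℝ),(1:ℝ)))) • Complex.I := by
    simp only [hfdef, hQz, hre, Real.exp_log hs0]
  rw [hpd1U s t hs, hfv]
  simp [Complex.real_smul]

theorem stmt5 (r₁ r₂ : ℝ) (h1 : 0 < r₁) (h2 : r₁ < r₂)
    (φ : ℝ → ℝ → ℝ)
    (hφc1 : Continuous (fun θ => φ r₁ θ)) (hφc2 : Continuous (fun θ => φ r₂ θ))
    (hφper : ∀ r θ : ℝ, φ r (θ + 2 * Real.pi) = φ r θ)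
    (U Ur : ℝ → ℝ → ℝ)
    (hUper : ∀ r θ : ℝ, U r (θ + 2 * Real.pi) = U r θ)
    (hC2 : ContDiffOn ℝ 2 (fun p : ℝ × ℝ => U p.1 p.2) (Set.Ioo r₁ r₂ ×ˢ (Set.univ : Set ℝ)))
    (hUr : ∀ r ∈ Set.Icc r₁ r₂, ∀ θ : ℝ,
      HasDerivWithinAt (fun s => U s θ) (Ur r θ) (Set.Icc r₁ r₂) r)
    (hC1 : ContinuousOn (fun p : ℝ × ℝ => (U p.1 p.2, Ur p.1 p.2, pd2 U p.1 p.2))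
        (Set.Icc r₁ r₂ ×ˢ (Set.univ : Set ℝ)))
    (hlap : ∀ r θ : ℝ, r ∈ Set.Ioo r₁ r₂ →
      pd1 (pd1 U) r θ + (1 / r) * pd1 U r θ + (1 / r ^ 2) * pd2 (pd2 U) r θ = 0)
    (hb1 : ∀ θ : ℝ, Ur r₁ θ = φ r₁ θ / r₁)
    (hb2 : ∀ θ : ℝ, Ur r₂ θ = φ r₂ θ / r₂)
    (u : ℝ → ℝ → ℝ)
    (hu : ∀ r θ : ℝ, u r θ = r * Ur r θ) :
    (∀ r ∈ Set.Icc r₁ r₂, ∀ θ : ℝ, u r (θ + 2 * Real.pi) = u r θ) ∧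
    ContinuousOn (fun p : ℝ × ℝ => u p.1 p.2) (Set.Icc r₁ r₂ ×ˢ (Set.univ : Set ℝ)) ∧
    (∀ r θ : ℝ, r ∈ Set.Ioo r₁ r₂ →
      pd1 (pd1 u) r θ + (1 / r) * pd1 u r θ + (1 / r ^ 2) * pd2 (pd2 u) r θ = 0) ∧
    (∀ θ : ℝ, u r₁ θ = φ r₁ θ) ∧ (∀ θ : ℝ, u r₂ θ = φ r₂ θ) := by
  have h10 : r₁ ≠ 0 := ne_of_gt h1
  have h20 : r₂ ≠ 0 := ne_of_gt (h1.trans h2)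
  have hIccSub : Set.Ioo r₁ r₂ ⊆ Set.Icc r₁ r₂ := Set.Ioo_subset_Icc_self
  have hUra : ∀ s t : ℝ, s ∈ Set.Ioo r₁ r₂ → Ur s t = pd1 U s t := by
    intro s t hs
    exact (((hUr s (hIccSub hs) t).hasDerivAt (Icc_mem_nhds hs.1 hs.2)).deriv).symm
  obtain ⟨f, hfdiff, hfre⟩ := key r₁ r₂ h1 h2 U hC2 hlap
  set S : Set ℂ := {z : ℂ | Real.log r₁ < z.re ∧ z.re < Real.log r₂} with hSdef
  have hSopen : IsOpen S := by
    have hh : S = Complex.re ⁻¹' (Set.Ioo (Real.log r₁) (Real.log r₂)) := rfl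
    rw [hh]; exact isOpen_Ioo.preimage Complex.continuous_re
  have hfd : ∀ z ∈ S, DifferentiableAt ℂ f z := fun z hz =>
    hfdiff.differentiableAt (hSopen.mem_nhds hz)
  have han : AnalyticOnNhd ℂ f S := hfdiff.analyticOnNhd hSopen
  have han' : AnalyticOnNhd ℂ (deriv f) S := han.deriv
  have hf'd : ∀ z ∈ S, DifferentiableAt ℂ (deriv f) z := fun z hz =>
    (han' z hz).differentiableAt
  have hγS : ∀ s t : ℝ, s ∈ Set.Ioo r₁ r₂ → (↑(Real.log s) + ↑t * Complex.I : ℂ) ∈ S := by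
    intro s t hs
    have hre : ((↑(Real.log s) + ↑t * Complex.I : ℂ)).re = Real.log s := by simp
    exact ⟨by rw [hre]; exact Real.log_lt_log h1 hs.1,
      by rw [hre]; exact Real.log_lt_log (h1.trans hs.1) hs.2⟩
  have hmain : ∀ s t : ℝ, s ∈ Set.Ioo r₁ r₂ →
      u s t = (f (↑(Real.log s) + ↑t * Complex.I)).re := by
    intro s t hs
    rw [hu, hfre s t hs, hUra s t hs]
  -- radial derivative helper
  have hDre1 : ∀ (g : ℂ → ℂ) (s t : ℝ), s ∈ Set.Ioo r₁ r₂ →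
      DifferentiableAt ℂ g (↑(Real.log s) + ↑t * Complex.I) →
      HasDerivAt (fun s' : ℝ => (g (↑(Real.log s') + ↑t * Complex.I)).re)
        ((deriv g (↑(Real.log s) + ↑t * Complex.I)).re / s) s := by
    intro g s t hs hg
    have hs0 : (0:ℝ) < s := h1.trans hs.1
    have hγ : HasDerivAt (fun s' : ℝ => (↑(Real.log s') : ℂ) + ↑t * Complex.I)
        (↑(s⁻¹ : ℝ) : ℂ) s := by
      have h := ((Real.hasDerivAt_log (ne_of_gt hs0)).ofReal_comp).add_const
        ((t : ℂ) * Complex.I)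
      simpa using h
    have hc2 := HasDerivAt.scomp s hg.hasDerivAt hγ
    have hc3 := Complex.reCLM.hasFDerivAt.comp_hasDerivAt s hc2
    simpa only [Complex.reCLM_apply, Function.comp_def, smul_eq_mul, Complex.mul_re,
      Complex.ofReal_re, Complex.ofReal_im, zero_mul, sub_zero, div_eq_inv_mul] using hc3
  -- angular derivative helper
  have hDre2 : ∀ (g : ℂ → ℂ) (x t : ℝ),
      DifferentiableAt ℂ g (↑x + ↑t * Complex.I) →
      HasDerivAt (fun t' : ℝ => (g (↑x + ↑t' * Complex.I)).re)
        ((deriv g (↑x + ↑t * Complex.I) * Complex.I).re) t := by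
    intro g x t hg
    have hδ : HasDerivAt (fun t' : ℝ => (↑x : ℂ) + ↑t' * Complex.I) Complex.I t := by
      have h0 : HasDerivAt (fun t' : ℝ => (↑t' : ℂ)) 1 t := by
        simpa using (hasDerivAt_id t).ofReal_comp
      have h := (h0.mul_const Complex.I).const_add (↑x : ℂ)
      simpa using h
    have hc2 := HasDerivAt.scomp t hg.hasDerivAt hδ
    have hc3 := Complex.reCLM.hasFDerivAt.comp_hasDerivAt t hc2
    simpa [smul_eq_mul, mul_comm, Function.comp_def] using hc3
  have hpd1u : ∀ s t : ℝ, s ∈ Set.Ioo r₁ r₂ →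
      pd1 u s t = (deriv f (↑(Real.log s) + ↑t * Complex.I)).re / s := by
    intro s t hs
    have heq : (fun s' => u s' t)
        =ᶠ[nhds s] (fun s' => (f (↑(Real.log s') + ↑t * Complex.I)).re) := by
      filter_upwards [Ioo_mem_nhds hs.1 hs.2] with s' hs' using hmain s' t hs'
    rw [pd1, heq.deriv_eq, (hDre1 f s t hs (hfd _ (hγS s t hs))).deriv]
  have hharm : ∀ r θ : ℝ, r ∈ Set.Ioo r₁ r₂ →
      pd1 (pd1 u) r θ + (1 / r) * pd1 u r θ + (1 / r ^ 2) * pd2 (pd2 u) r θ = 0 := by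
    intro r θ hr
    have hr0 : r ≠ 0 := ne_of_gt (h1.trans hr.1)
    have hzS := hγS r θ hr
    have heq2 : (fun s => pd1 u s θ) =ᶠ[nhds r]
        (fun s => (deriv f (↑(Real.log s) + ↑θ * Complex.I)).re * s⁻¹) := by
      filter_upwards [Ioo_mem_nhds hr.1 hr.2] with s hs
      rw [hpd1u s θ hs, div_eq_mul_inv]
    have hd1 : HasDerivAt (fun s => (deriv f (↑(Real.log s) + ↑θ * Complex.I)).re * s⁻¹)
        (((deriv (deriv f) (↑(Real.log r) + ↑θ * Complex.I)).re / r) * r⁻¹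
          + (deriv f (↑(Real.log r) + ↑θ * Complex.I)).re * (-(r^2)⁻¹)) r :=
      (hDre1 (deriv f) r θ hr (hf'd _ hzS)).mul (hasDerivAt_inv hr0)
    have e11 : pd1 (pd1 u) r θ
        = ((deriv (deriv f) (↑(Real.log r) + ↑θ * Complex.I)).re / r) * r⁻¹
          + (deriv f (↑(Real.log r) + ↑θ * Complex.I)).re * (-(r^2)⁻¹) := by
      rw [pd1, heq2.deriv_eq, hd1.deriv]
    have hpd2u : ∀ t : ℝ, pd2 u r t
        = (deriv f (↑(Real.log r) + ↑t * Complex.I) * Complex.I).re := by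
      intro t
      have hfun : (fun t' => u r t') = fun t' : ℝ => (f (↑(Real.log r) + ↑t' * Complex.I)).re :=
        funext fun t' => hmain r t' hr
      rw [pd2, hfun, (hDre2 f (Real.log r) t (hfd _ (hγS r t hr))).deriv]
    have hgd : DifferentiableAt ℂ (fun w => deriv f w * Complex.I)
        (↑(Real.log r) + ↑θ * Complex.I) := (hf'd _ hzS).mul_const Complex.I
    have e22 : pd2 (pd2 u) r θ
        = -(deriv (deriv f) (↑(Real.log r) + ↑θ * Complex.I)).re := by
      have hfun2 : (fun t => pd2 u r t)
          = fun t : ℝ => ((fun w => deriv f w * Complex.I)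
              (↑(Real.log r) + ↑t * Complex.I)).re := funext fun t => hpd2u t
      rw [pd2, hfun2, (hDre2 (fun w => deriv f w * Complex.I) (Real.log r) θ hgd).deriv]
      rw [deriv_mul_const (hf'd _ hzS) Complex.I]
      rw [mul_assoc, Complex.I_mul_I, mul_neg_one, Complex.neg_re]
    rw [e11, hpd1u r θ hr, e22]
    field_simp
    ring
  refine ⟨?_, ?_, hharm, ?_, ?_⟩
  · intro r hr θ
    rw [hu, hu]
    congr 1
    have hW := hUr r hr (θ + 2 * Real.pi)
    have hfun : (fun s => U s (θ + 2 * Real.pi)) = fun s => U s θ :=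
      funext fun s => hUper s θ
    rw [hfun] at hW
    rw [← hW.derivWithin (uniqueDiffOn_Icc h2 r hr),
      ← (hUr r hr θ).derivWithin (uniqueDiffOn_Icc h2 r hr)]
  · have hUrc : ContinuousOn (fun p : ℝ × ℝ => Ur p.1 p.2)
        (Set.Icc r₁ r₂ ×ˢ (Set.univ : Set ℝ)) :=
      (continuous_fst.comp continuous_snd).comp_continuousOn hC1
    have hfun : (fun p : ℝ × ℝ => u p.1 p.2) = fun p => p.1 * Ur p.1 p.2 :=
      funext fun p => hu p.1 p.2
    rw [hfun]
    exact continuous_fst.continuousOn.mul hUrc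
  · intro θ
    rw [hu, hb1]
    field_simp
  · intro θ
    rw [hu, hb2]
    field_simp
end

section
/- Let f: ∂𝔻 → ℝ be continuous on the unit circle with ∫₀^{2π} f(e^{iθ}) dθ = 0, and let u be the (unique) solution of the Dirichlet problem on the unit disk 𝔻 with boundary data f. Define U(z) = ∫₀¹ u(ρz)/ρ dρ for z ∈ 𝔻. Then U is well defined (the integrand extends continuously to ρ = 0 with value the directional derivative ⟨∇u(0), z⟩), U is harmonic in 𝔻, and U(0) = 0. -/
open Metric Complex Filter Set MeasureTheory intervalIntegral

noncomputable def pdx (f : ℂ → ℝ) (z : ℂ) : ℝ := deriv (fun t : ℝ => f (z + t)) 0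
noncomputable def pdy (f : ℂ → ℝ) (z : ℂ) : ℝ := deriv (fun t : ℝ => f (z + t * Complex.I)) 0

private lemma lineDeriv_aux {F : Type*} [NormedAddCommGroup F] [NormedSpace ℝ F]
    {v : ℂ → F} {L : ℂ →L[ℝ] F} {w e : ℂ} {t₀ : ℝ}
    (hv : HasFDerivAt v L (w + t₀ • e)) :
    HasDerivAt (fun t : ℝ => v (w + t • e)) (L e) t₀ := by
  have h1 : HasDerivAt (fun t : ℝ => w + t • e) e t₀ := by
    simpa using ((hasDerivAt_id t₀).smul_const e).const_add w
  simpa [Function.comp_def] using hv.comp_hasDerivAt t₀ h1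

private lemma hasDerivAt_apply_line {v : ℂ → ℂ →L[ℝ] ℝ} {M : ℂ →L[ℝ] (ℂ →L[ℝ] ℝ)} {w e e' : ℂ}
    {t₀ : ℝ} (hv : HasFDerivAt v M (w + t₀ • e)) :
    HasDerivAt (fun t : ℝ => v (w + t • e) e') (M e e') t₀ := by
  have h1 : HasDerivAt (fun t : ℝ => v (w + t • e)) (M e) t₀ := lineDeriv_aux hv
  simpa [Function.comp_def] using ((ContinuousLinearMap.apply ℝ ℝ e').hasFDerivAt).comp_hasDerivAt t₀ h1

private lemma pdx_eq {v : ℂ → ℝ} {z : ℂ} (hv : DifferentiableAt ℝ v z) :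
    pdx v z = fderiv ℝ v z 1 := by
  have h : HasDerivAt (fun t : ℝ => v (z + t • (1:ℂ))) (fderiv ℝ v z 1) 0 :=
    lineDeriv_aux (by simpa using hv.hasFDerivAt)
  have he : (fun t : ℝ => v (z + t • (1:ℂ))) = fun t : ℝ => v (z + t) := by
    ext t; norm_num [Complex.real_smul]
  rw [he] at h; exact h.deriv

private lemma pdy_eq {v : ℂ → ℝ} {z : ℂ} (hv : DifferentiableAt ℝ v z) :
    pdy v z = fderiv ℝ v z Complex.I := by
  have h : HasDerivAt (fun t : ℝ => v (z + t • Complex.I)) (fderiv ℝ v z Complex.I) 0 :=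
    lineDeriv_aux (by simpa using hv.hasFDerivAt)
  have he : (fun t : ℝ => v (z + t • Complex.I)) = fun t : ℝ => v (z + t * Complex.I) := by
    ext t; norm_num [Complex.real_smul]
  rw [he] at h; exact h.deriv

private lemma decompR {F : Type*} [NormedAddCommGroup F] [NormedSpace ℝ F]
    (T : ℂ →L[ℝ] F) (v : ℂ) : T v = v.re • T 1 + v.im • T Complex.I := by
  conv_lhs => rw [show v = v.re • (1:ℂ) + v.im • Complex.I by
    rw [Complex.real_smul, Complex.real_smul, mul_one, Complex.re_add_im]]
  rw [map_add, T.map_smul, T.map_smul]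
set_option maxHeartbeats 8000000 in
theorem stmt15 (f : ℂ → ℝ) (hf : ContinuousOn f (Metric.sphere (0 : ℂ) 1))
    (hf0 : (∫ θ in (0:ℝ)..(2 * Real.pi), f (Complex.exp ((θ : ℂ) * Complex.I))) = 0)
    (u : ℂ → ℝ)
    (huC : ContDiffOn ℝ 2 u (Metric.ball (0 : ℂ) 1))
    (huh : ∀ z ∈ Metric.ball (0 : ℂ) 1, pdx (pdx u) z + pdy (pdy u) z = 0)
    (hucont : ContinuousOn u (Metric.closedBall (0 : ℂ) 1))
    (hub : ∀ z ∈ Metric.sphere (0 : ℂ) 1, u z = f z)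
    (U : ℂ → ℝ)
    (hU : ∀ z : ℂ, U z = ∫ ρ in (0:ℝ)..1, u ((ρ : ℂ) * z) / ρ) :
    (∀ z ∈ Metric.ball (0 : ℂ) 1,
      IntervalIntegrable (fun ρ : ℝ => u ((ρ : ℂ) * z) / ρ) MeasureTheory.volume 0 1 ∧
      Filter.Tendsto (fun ρ : ℝ => u ((ρ : ℂ) * z) / ρ) (nhdsWithin 0 (Set.Ioi 0))
        (nhds (pdx u 0 * z.re + pdy u 0 * z.im))) ∧
    (∀ z ∈ Metric.ball (0 : ℂ) 1, pdx (pdx U) z + pdy (pdy U) z = 0) ∧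
    U 0 = 0 := by
  set D := Metric.ball (0 : ℂ) 1 with hDdef
  have hDo : IsOpen D := Metric.isOpen_ball
  have hmemD : ∀ w : ℂ, w ∈ D ↔ ‖w‖ < 1 := by
    intro w; simp [hDdef, Metric.mem_ball, Complex.dist_eq]
  -- basic differentiability facts
  set u' : ℂ → (ℂ →L[ℝ] ℝ) := fun w => fderiv ℝ u w with hu'def
  have hdiffu : ∀ w ∈ D, DifferentiableAt ℝ u w := fun w hw =>
    (huC.differentiableOn two_ne_zero).differentiableAt (hDo.mem_nhds hw)
  have hdu : ∀ w ∈ D, HasFDerivAt u (u' w) w := fun w hw => (hdiffu w hw).hasFDerivAt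
  have hu'C : ContDiffOn ℝ 1 u' D := huC.fderiv_of_isOpen hDo (le_refl 2)
  set u'' : ℂ → (ℂ →L[ℝ] (ℂ →L[ℝ] ℝ)) := fun w => fderiv ℝ u' w with hu''def
  have hdiffu' : ∀ w ∈ D, DifferentiableAt ℝ u' w := fun w hw =>
    (hu'C.differentiableOn one_ne_zero).differentiableAt (hDo.mem_nhds hw)
  have hdu' : ∀ w ∈ D, HasFDerivAt u' (u'' w) w := fun w hw => (hdiffu' w hw).hasFDerivAt
  have hu'cont : ContinuousOn u' D := hu'C.continuousOn
  have hu''cont : ContinuousOn u'' D := hu'C.continuousOn_fderiv_of_isOpen hDo le_rfl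
  have hmemnear : ∀ w ∈ D, ∀ e : ℂ, ∀ᶠ t : ℝ in nhds 0, w + t • e ∈ D := by
    intro w hw e
    have hcont : Continuous (fun t : ℝ => w + t • e) := by fun_prop
    have htend : Filter.Tendsto (fun t : ℝ => w + t • e) (nhds 0) (nhds w) := by
      have h0 := hcont.continuousAt (x := (0:ℝ))
      rw [ContinuousAt] at h0
      simpa using h0
    exact htend.eventually_mem (hDo.mem_nhds hw)
  have hpd2 : ∀ w ∈ D, pdx (pdx u) w = u'' w 1 1 ∧
      pdy (pdy u) w = u'' w Complex.I Complex.I := by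
    intro w hw
    constructor
    · have hev : (fun t : ℝ => pdx u (w + (t:ℂ))) =ᶠ[nhds (0:ℝ)]
          (fun t : ℝ => u' (w + (t:ℂ)) 1) := by
        filter_upwards [hmemnear w hw 1] with t ht
        have ht' : w + (t:ℂ) ∈ D := by simpa [Complex.real_smul] using ht
        exact pdx_eq (hdiffu _ ht')
      have h2 : HasDerivAt (fun t : ℝ => u' (w + t • (1:ℂ)) 1) (u'' w 1 1) 0 :=
        hasDerivAt_apply_line (by simpa using hdu' w hw)
      have he : (fun t : ℝ => u' (w + t • (1:ℂ)) 1) = fun t : ℝ => u' (w + (t:ℂ)) 1 := by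
        ext t; norm_num [Complex.real_smul]
      rw [he] at h2
      calc pdx (pdx u) w = deriv (fun t : ℝ => pdx u (w + (t:ℂ))) 0 := rfl
        _ = deriv (fun t : ℝ => u' (w + (t:ℂ)) 1) 0 := hev.deriv_eq
        _ = u'' w 1 1 := h2.deriv
    · have hev : (fun t : ℝ => pdy u (w + (t:ℂ) * Complex.I)) =ᶠ[nhds (0:ℝ)]
          (fun t : ℝ => u' (w + (t:ℂ) * Complex.I) Complex.I) := by
        filter_upwards [hmemnear w hw Complex.I] with t ht
        have ht' : w + (t:ℂ) * Complex.I ∈ D := by simpa [Complex.real_smul] using ht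
        exact pdy_eq (hdiffu _ ht')
      have h2 : HasDerivAt (fun t : ℝ => u' (w + t • Complex.I) Complex.I)
          (u'' w Complex.I Complex.I) 0 := hasDerivAt_apply_line (by simpa using hdu' w hw)
      have he : (fun t : ℝ => u' (w + t • Complex.I) Complex.I)
          = fun t : ℝ => u' (w + (t:ℂ) * Complex.I) Complex.I := by
        ext t; norm_num [Complex.real_smul]
      rw [he] at h2
      calc pdy (pdy u) w = deriv (fun t : ℝ => pdy u (w + (t:ℂ) * Complex.I)) 0 := rfl
        _ = deriv (fun t : ℝ => u' (w + (t:ℂ) * Complex.I) Complex.I) 0 := hev.deriv_eq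
        _ = u'' w Complex.I Complex.I := h2.deriv
  have hlap : ∀ w ∈ D, u'' w 1 1 + u'' w Complex.I Complex.I = 0 := by
    intro w hw
    have := huh w hw
    rwa [(hpd2 w hw).1, (hpd2 w hw).2] at this
  have hsymm : ∀ w ∈ D, u'' w 1 Complex.I = u'' w Complex.I 1 := by
    intro w hw
    have hev : ∀ᶠ y in nhds w, HasFDerivAt u (u' y) y := by
      filter_upwards [hDo.mem_nhds hw] with y hy using hdu y hy
    exact second_derivative_symmetric_of_eventually hev (hdu' w hw) 1 Complex.I
  -- the holomorphic function g = u_x - i u_y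
  set g : ℂ → ℂ := fun w => (u' w 1 : ℂ) - (u' w Complex.I : ℂ) * Complex.I with hgdef
  have hg : ∀ w ∈ D, HasDerivAt g ((u'' w 1 1 : ℂ) - (u'' w 1 Complex.I : ℂ) * Complex.I) w := by
    intro w hw
    rw [hgdef]
    have hA1 : HasFDerivAt (fun w' => u' w' 1)
        ((ContinuousLinearMap.apply ℝ ℝ (1:ℂ)).comp (u'' w)) w :=
      ((ContinuousLinearMap.apply ℝ ℝ (1:ℂ)).hasFDerivAt).comp w (hdu' w hw)
    have hA2 : HasFDerivAt (fun w' => u' w' Complex.I)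
        ((ContinuousLinearMap.apply ℝ ℝ Complex.I).comp (u'' w)) w :=
      ((ContinuousLinearMap.apply ℝ ℝ Complex.I).hasFDerivAt).comp w (hdu' w hw)
    have h1 := Complex.ofRealCLM.hasFDerivAt.comp w hA1
    have h2 := (Complex.ofRealCLM.hasFDerivAt.comp w hA2).mul_const' Complex.I
    have hsum := h1.sub h2
    have H : (ContinuousLinearMap.smulRight (1 : ℂ →L[ℂ] ℂ)
          ((u'' w 1 1 : ℂ) - (u'' w 1 Complex.I : ℂ) * Complex.I)).restrictScalars ℝ
        = (Complex.ofRealCLM.comp ((ContinuousLinearMap.apply ℝ ℝ (1:ℂ)).comp (u'' w)))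
          - (Complex.ofRealCLM.comp ((ContinuousLinearMap.apply ℝ ℝ Complex.I).comp
              (u'' w))).smulRight Complex.I := by
      ext v
      have e1 : (u'' w) v 1 = v.re * ((u'' w) 1 1) + v.im * ((u'' w) Complex.I 1) := by
        rw [decompR (u'' w) v]; simp
      have e2 : (u'' w) v Complex.I
          = v.re * ((u'' w) 1 Complex.I) + v.im * ((u'' w) Complex.I Complex.I) := by
        rw [decompR (u'' w) v]; simp
      have hb := hsymm w hw
      have ha : (u'' w) Complex.I Complex.I = -((u'' w) 1 1) := by linarith [hlap w hw]
      simp only [ContinuousLinearMap.coe_restrictScalars', ContinuousLinearMap.smulRight_apply,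
        ContinuousLinearMap.coe_comp', Function.comp_apply, ContinuousLinearMap.apply_apply,
        Complex.ofRealCLM_apply, ContinuousLinearMap.sub_apply, ContinuousLinearMap.one_apply,
        smul_eq_mul]
      rw [e1, e2, ← hb, ha]
      apply Complex.ext <;>
        simp [Complex.mul_re, Complex.mul_im] <;> ring
    have h3 := hasFDerivAt_of_restrictScalars ℝ hsum H
    simpa [Function.comp_def, Pi.sub_def] using h3.hasDerivAt
  have hgcont : ContinuousOn g D := by
    have h1 : ContinuousOn (fun w => u' w 1) D :=
      (ContinuousLinearMap.apply ℝ ℝ (1:ℂ)).continuous.comp_continuousOn hu'cont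
    have h2 : ContinuousOn (fun w => u' w Complex.I) D :=
      (ContinuousLinearMap.apply ℝ ℝ Complex.I).continuous.comp_continuousOn hu'cont
    rw [hgdef]
    exact (Complex.continuous_ofReal.comp_continuousOn h1).sub
      ((Complex.continuous_ofReal.comp_continuousOn h2).mul continuousOn_const)
  have hcirc : ∀ r ∈ Set.Ioo (0:ℝ) 1, (∮ z in C(0, r), g z) = 0 := by
    intro r hr
    have hsub : Metric.closedBall (0:ℂ) r ⊆ D := Metric.closedBall_subset_ball hr.2
    exact circleIntegral_eq_zero_of_differentiable_on_off_countable hr.1.le Set.countable_empty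
      (hgcont.mono hsub)
      (fun z hz => (hg z (hsub (Metric.ball_subset_closedBall hz.1))).differentiableAt)
  -- the circle average B
  set B : ℝ → ℝ := fun r => ∫ θ in (0:ℝ)..(2*Real.pi), u ((r:ℂ) * Complex.exp ((θ:ℂ) * Complex.I))
    with hBdef
  have hBderiv : ∀ r₀ : ℝ, |r₀| < 1 → HasDerivAt B
      (∫ θ in (0:ℝ)..(2*Real.pi),
        u' ((r₀:ℂ) * Complex.exp ((θ:ℂ) * Complex.I)) (Complex.exp ((θ:ℂ) * Complex.I))) r₀ := by
    intro r₀ hr₀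
    set ε : ℝ := (1 - |r₀|)/2 with hεdef
    set R : ℝ := (1 + |r₀|)/2 with hRdef
    have hεpos : 0 < ε := by rw [hεdef]; linarith
    have hR1 : R < 1 := by rw [hRdef]; linarith
    have hnorm : ∀ (r θ : ℝ), ‖(r:ℂ) * Complex.exp ((θ:ℂ) * Complex.I)‖ = |r| := by
      intro r θ
      rw [norm_mul, Complex.norm_exp_ofReal_mul_I, mul_one, Complex.norm_real, Real.norm_eq_abs]
    have hballR : ∀ r ∈ Metric.ball r₀ ε, |r| ≤ R := by
      intro r hr
      rw [Metric.mem_ball, Real.dist_eq] at hr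
      rw [hRdef]
      have := abs_sub_abs_le_abs_sub r r₀
      rw [hεdef] at hr
      linarith
    have hmemball : ∀ (r θ : ℝ), |r| < 1 → (r:ℂ) * Complex.exp ((θ:ℂ) * Complex.I) ∈ D := by
      intro r θ h; rw [hmemD, hnorm]; exact h
    obtain ⟨C, hC⟩ : ∃ C, ∀ x ∈ Metric.closedBall (0:ℂ) R, ‖u' x‖ ≤ C :=
      (isCompact_closedBall (0:ℂ) R).exists_bound_of_continuousOn
        (hu'cont.mono (Metric.closedBall_subset_ball hR1))
    have hpath : ∀ r : ℝ, Continuous fun θ : ℝ => (r:ℂ) * Complex.exp ((θ:ℂ) * Complex.I) := by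
      intro r; fun_prop
    have hcontF : ∀ r : ℝ, |r| ≤ 1 →
        Continuous fun θ : ℝ => u ((r:ℂ) * Complex.exp ((θ:ℂ) * Complex.I)) := by
      intro r hr
      exact hucont.comp_continuous (hpath r)
        (fun θ : ℝ => show (r:ℂ) * Complex.exp ((θ:ℂ) * Complex.I) ∈ Metric.closedBall (0:ℂ) 1 by
          rw [Metric.mem_closedBall, Complex.dist_eq, sub_zero, hnorm]; exact hr)
    have key := intervalIntegral.hasDerivAt_integral_of_dominated_loc_of_deriv_le
      (F := fun (r : ℝ) (θ : ℝ) => u ((r:ℂ) * Complex.exp ((θ:ℂ) * Complex.I)))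
      (F' := fun (r : ℝ) (θ : ℝ) =>
        u' ((r:ℂ) * Complex.exp ((θ:ℂ) * Complex.I)) (Complex.exp ((θ:ℂ) * Complex.I)))
      (a := (0:ℝ)) (b := 2*Real.pi) (x₀ := r₀) (bound := fun _ => C)
      (μ := MeasureTheory.volume) (Metric.ball_mem_nhds _ hεpos)
      ?_ ?_ ?_ ?_ ?_ ?_
    · rw [hBdef]; exact key.2
    · filter_upwards [Metric.ball_mem_nhds r₀ hεpos] with r hr
      exact ((hcontF r ((hballR r hr).trans hR1.le)).aestronglyMeasurable).restrict
    · exact (hcontF r₀ hr₀.le).intervalIntegrable 0 (2*Real.pi)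
    · have h1 : Continuous fun θ : ℝ => u' ((r₀:ℂ) * Complex.exp ((θ:ℂ) * Complex.I)) :=
        hu'cont.comp_continuous (hpath r₀) (fun θ => hmemball r₀ θ hr₀)
      have h2 : Continuous fun θ : ℝ => Complex.exp ((θ:ℂ) * Complex.I) := by fun_prop
      exact (h1.clm_apply h2).aestronglyMeasurable.restrict
    · apply Filter.Eventually.of_forall
      intro θ _ r hr
      have hmem : (r:ℂ) * Complex.exp ((θ:ℂ) * Complex.I) ∈ Metric.closedBall (0:ℂ) R := by
        rw [Metric.mem_closedBall, Complex.dist_eq, sub_zero,  hnorm]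
        exact hballR r hr
      calc ‖u' ((r:ℂ) * Complex.exp ((θ:ℂ) * Complex.I)) (Complex.exp ((θ:ℂ) * Complex.I))‖
          ≤ ‖u' ((r:ℂ) * Complex.exp ((θ:ℂ) * Complex.I))‖ * ‖Complex.exp ((θ:ℂ) * Complex.I)‖ :=
            ContinuousLinearMap.le_opNorm _ _
        _ ≤ C := by rw [Complex.norm_exp_ofReal_mul_I, mul_one]; exact hC _ hmem
    · exact intervalIntegrable_const
    · apply Filter.Eventually.of_forall
      intro θ _ r hr
      have hrd : (r:ℂ) * Complex.exp ((θ:ℂ) * Complex.I) ∈ D :=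
        hmemball r θ (lt_of_le_of_lt (hballR r hr) hR1)
      have h := lineDeriv_aux (v := u) (w := 0) (e := Complex.exp ((θ:ℂ) * Complex.I)) (t₀ := r)
        (by rw [show (0:ℂ) + r • Complex.exp ((θ:ℂ) * Complex.I)
              = (r:ℂ) * Complex.exp ((θ:ℂ) * Complex.I) by rw [zero_add, Complex.real_smul]]
            exact hdu _ hrd)
      simpa [Complex.real_smul] using h
  have hB'zero : ∀ r ∈ Set.Ioo (0:ℝ) 1, HasDerivAt B 0 r := by
    intro r hr
    have habs : |r| < 1 := by rw [_root_.abs_of_pos hr.1]; exact hr.2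
    have hd := hBderiv r habs
    have hgc : Continuous fun θ : ℝ =>
        Complex.exp ((θ:ℂ) * Complex.I) * g ((r:ℂ) * Complex.exp ((θ:ℂ) * Complex.I)) := by
      have hpath : Continuous fun θ : ℝ => (r:ℂ) * Complex.exp ((θ:ℂ) * Complex.I) := by fun_prop
      have hmem : ∀ θ : ℝ, (r:ℂ) * Complex.exp ((θ:ℂ) * Complex.I) ∈ D := by
        intro θ
        rw [hmemD, norm_mul, Complex.norm_exp_ofReal_mul_I, mul_one, Complex.norm_real,
          Real.norm_eq_abs]
        exact habs
      exact (Complex.continuous_exp.comp (by fun_prop)).mul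
        (hgcont.comp_continuous hpath hmem)
    have hIC : (∫ θ in (0:ℝ)..(2*Real.pi),
        Complex.exp ((θ:ℂ) * Complex.I) * g ((r:ℂ) * Complex.exp ((θ:ℂ) * Complex.I))) = 0 := by
      have h0 : ((r:ℂ) * Complex.I) * ∫ θ in (0:ℝ)..(2*Real.pi),
          Complex.exp ((θ:ℂ) * Complex.I) * g ((r:ℂ) * Complex.exp ((θ:ℂ) * Complex.I)) = 0 := by
        rw [← intervalIntegral.integral_const_mul, ← hcirc r hr]
        unfold circleIntegral
        apply intervalIntegral.integral_congr
        intro θ _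
        simp only [deriv_circleMap, circleMap, smul_eq_mul, zero_add, Complex.ofReal_zero]
        ring
      have hne : ((r:ℂ) * Complex.I) ≠ 0 := by
        simp [Complex.ofReal_ne_zero, ne_of_gt hr.1, Complex.I_ne_zero]
      exact (mul_eq_zero.mp h0).resolve_left hne
    have heq : (∫ θ in (0:ℝ)..(2*Real.pi),
        u' ((r:ℂ) * Complex.exp ((θ:ℂ) * Complex.I)) (Complex.exp ((θ:ℂ) * Complex.I))) = 0 := by
      have hre : ∀ θ : ℝ, u' ((r:ℂ) * Complex.exp ((θ:ℂ) * Complex.I))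
            (Complex.exp ((θ:ℂ) * Complex.I))
          = Complex.reCLM (Complex.exp ((θ:ℂ) * Complex.I)
              * g ((r:ℂ) * Complex.exp ((θ:ℂ) * Complex.I))) := by
        intro θ
        rw [decompR (u' ((r:ℂ) * Complex.exp ((θ:ℂ) * Complex.I)))
          (Complex.exp ((θ:ℂ) * Complex.I))]
        simp [hgdef, Complex.mul_re, smul_eq_mul]
        try ring
      calc (∫ θ in (0:ℝ)..(2*Real.pi),
            u' ((r:ℂ) * Complex.exp ((θ:ℂ) * Complex.I)) (Complex.exp ((θ:ℂ) * Complex.I)))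
          = ∫ θ in (0:ℝ)..(2*Real.pi), Complex.reCLM (Complex.exp ((θ:ℂ) * Complex.I)
              * g ((r:ℂ) * Complex.exp ((θ:ℂ) * Complex.I))) := by
            apply intervalIntegral.integral_congr; intro θ _; exact hre θ
        _ = Complex.reCLM (∫ θ in (0:ℝ)..(2*Real.pi), Complex.exp ((θ:ℂ) * Complex.I)
              * g ((r:ℂ) * Complex.exp ((θ:ℂ) * Complex.I))) :=
            Complex.reCLM.intervalIntegral_comp_comm (hgc.intervalIntegrable _ _)
        _ = 0 := by rw [hIC]; simp
    rwa [heq] at hd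
  have hB'zero0 : HasDerivAt B 0 0 := by
    have hd := hBderiv 0 (by norm_num)
    have hexp : (∫ θ in (0:ℝ)..(2*Real.pi), Complex.exp ((θ:ℂ) * Complex.I)) = 0 := by
      have hcomm : ∀ θ : ℝ, θ ∈ Set.uIcc (0:ℝ) (2*Real.pi) →
          Complex.exp ((θ:ℂ) * Complex.I) = Complex.exp (Complex.I * (θ:ℂ)) := by
        intro θ _; rw [mul_comm]
      rw [intervalIntegral.integral_congr hcomm, integral_exp_mul_complex Complex.I_ne_zero]
      have h2 : Complex.I * ((2*Real.pi : ℝ):ℂ) = 2 * (Real.pi:ℂ) * Complex.I := by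
        push_cast; ring
      rw [h2, Complex.exp_two_pi_mul_I]
      simp
    have heq : (∫ θ in (0:ℝ)..(2*Real.pi),
        u' (((0:ℝ):ℂ) * Complex.exp ((θ:ℂ) * Complex.I)) (Complex.exp ((θ:ℂ) * Complex.I)))
        = 0 := by
      have h2 : Continuous fun θ : ℝ => Complex.exp ((θ:ℂ) * Complex.I) := by fun_prop
      calc (∫ θ in (0:ℝ)..(2*Real.pi),
            u' (((0:ℝ):ℂ) * Complex.exp ((θ:ℂ) * Complex.I)) (Complex.exp ((θ:ℂ) * Complex.I)))
          = ∫ θ in (0:ℝ)..(2*Real.pi), u' 0 (Complex.exp ((θ:ℂ) * Complex.I)) := by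
            apply intervalIntegral.integral_congr; intro θ _; norm_num
        _ = u' 0 (∫ θ in (0:ℝ)..(2*Real.pi), Complex.exp ((θ:ℂ) * Complex.I)) :=
            (u' 0).intervalIntegral_comp_comm (h2.intervalIntegrable _ _)
        _ = 0 := by rw [hexp]; simp
    rwa [heq] at hd
  have hBconst : ∀ b ∈ Set.Ico (0:ℝ) 1, B b = 2 * Real.pi * u 0 := by
    have hB0 : B 0 = 2 * Real.pi * u 0 := by
      rw [hBdef]
      simp
      try ring
    intro b hb
    rcases eq_or_lt_of_le hb.1 with heq0 | hbpos
    · rw [← heq0]; exact hB0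
    · have hcont : ContinuousOn B (Set.Icc 0 b) := by
        intro x hx
        have habs : |x| < 1 := by
          rw [_root_.abs_of_nonneg hx.1]; exact lt_of_le_of_lt hx.2 hb.2
        exact ((hBderiv x habs).continuousAt).continuousWithinAt
      have hder : ∀ x ∈ Set.Ico 0 b, HasDerivWithinAt B 0 (Set.Ici x) x := by
        intro x hx
        rcases eq_or_lt_of_le hx.1 with heq0 | hxpos
        · rw [← heq0]; exact hB'zero0.hasDerivWithinAt
        · exact (hB'zero x ⟨hxpos, lt_trans hx.2 hb.2⟩).hasDerivWithinAt
      have := constant_of_has_deriv_right_zero hcont hder b (Set.right_mem_Icc.mpr hbpos.le)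
      rw [this, hB0]
  have hu0 : u 0 = 0 := by
    haveI hne : (nhdsWithin (1:ℝ) (Set.Ico 0 1)).NeBot := by
      apply mem_closure_iff_nhdsWithin_neBot.mp
      rw [closure_Ico (by norm_num : (0:ℝ) ≠ 1)]
      exact Set.right_mem_Icc.mpr zero_le_one
    obtain ⟨C, hC⟩ : ∃ C, ∀ x ∈ Metric.closedBall (0:ℂ) 1, ‖u x‖ ≤ C :=
      (isCompact_closedBall (0:ℂ) 1).exists_bound_of_continuousOn hucont
    have hmemcb : ∀ (b θ : ℝ), |b| ≤ 1 →
        (b:ℂ) * Complex.exp ((θ:ℂ) * Complex.I) ∈ Metric.closedBall (0:ℂ) 1 := by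
      intro b θ hb
      rw [Metric.mem_closedBall, Complex.dist_eq, sub_zero,  norm_mul,
        Complex.norm_exp_ofReal_mul_I, mul_one, Complex.norm_real, Real.norm_eq_abs]
      exact hb
    have hcF : ∀ b : ℝ, |b| ≤ 1 →
        Continuous fun θ : ℝ => u ((b:ℂ) * Complex.exp ((θ:ℂ) * Complex.I)) := by
      intro b hb
      exact hucont.comp_continuous (by fun_prop) (fun θ => hmemcb b θ hb)
    have hlim : Filter.Tendsto B (nhdsWithin 1 (Set.Ico 0 1))
        (nhds (∫ θ in (0:ℝ)..(2*Real.pi), u (((1:ℝ):ℂ) * Complex.exp ((θ:ℂ) * Complex.I)))) := by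
      rw [hBdef]
      apply intervalIntegral.tendsto_integral_filter_of_dominated_convergence (fun _ => C)
      · filter_upwards [self_mem_nhdsWithin] with b hb
        exact ((hcF b (by rw [_root_.abs_of_nonneg hb.1]; exact hb.2.le)).aestronglyMeasurable).restrict
      · filter_upwards [self_mem_nhdsWithin] with b hb
        apply Filter.Eventually.of_forall
        intro θ _
        exact hC _ (hmemcb b θ (by rw [_root_.abs_of_nonneg hb.1]; exact hb.2.le))
      · exact intervalIntegrable_const
      · apply Filter.Eventually.of_forall
        intro θ _
        have hcw : ContinuousWithinAt u (Metric.closedBall (0:ℂ) 1)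
            (((1:ℝ):ℂ) * Complex.exp ((θ:ℂ) * Complex.I)) :=
          hucont _ (hmemcb 1 θ (by norm_num))
        apply hcw.tendsto.comp
        apply tendsto_nhdsWithin_of_tendsto_nhds_of_eventually_within
        · exact ((by fun_prop : Continuous fun b : ℝ =>
            (b:ℂ) * Complex.exp ((θ:ℂ) * Complex.I)).continuousAt).tendsto.mono_left
            nhdsWithin_le_nhds
        · filter_upwards [self_mem_nhdsWithin] with b hb
          exact hmemcb b θ (by rw [_root_.abs_of_nonneg hb.1]; exact hb.2.le)
    have hconst : Filter.Tendsto B (nhdsWithin 1 (Set.Ico 0 1))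
        (nhds (2 * Real.pi * u 0)) := by
      apply Filter.Tendsto.congr' _ tendsto_const_nhds
      filter_upwards [self_mem_nhdsWithin] with b hb using (hBconst b hb).symm
    have hBend : (∫ θ in (0:ℝ)..(2*Real.pi),
        u (((1:ℝ):ℂ) * Complex.exp ((θ:ℂ) * Complex.I))) = 0 := by
      have hcg : (∫ θ in (0:ℝ)..(2*Real.pi), u (((1:ℝ):ℂ) * Complex.exp ((θ:ℂ) * Complex.I)))
          = ∫ θ in (0:ℝ)..(2*Real.pi), f (Complex.exp ((θ:ℂ) * Complex.I)) := by
        apply intervalIntegral.integral_congr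
        intro θ _
        simp only [Complex.ofReal_one, one_mul]
        apply hub
        rw [Metric.mem_sphere, Complex.dist_eq, sub_zero, 
          Complex.norm_exp_ofReal_mul_I]
      rw [hcg]
      exact hf0
    have h20 : 2 * Real.pi * u 0 = 0 := by
      have := tendsto_nhds_unique hconst hlim
      rw [hBend] at this
      exact this
    have hπ : Real.pi > 0 := Real.pi_pos
    nlinarith
  -- part 1 : integrability
  have h0D : (0:ℂ) ∈ D := by rw [hmemD]; norm_num
  have part1a : ∀ z ∈ D, IntervalIntegrable (fun ρ : ℝ => u ((ρ : ℂ) * z) / ρ)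
      MeasureTheory.volume 0 1 := by
    intro z hz
    have hz1 : ‖z‖ < 1 := (hmemD z).mp hz
    have hsub : Metric.closedBall (0:ℂ) ‖z‖ ⊆ D := by
      rw [hDdef]; exact Metric.closedBall_subset_ball hz1
    obtain ⟨C, hC⟩ : ∃ C, ∀ x ∈ Metric.closedBall (0:ℂ) ‖z‖, ‖u' x‖ ≤ C :=
      (isCompact_closedBall _ _).exists_bound_of_continuousOn (hu'cont.mono hsub)
    have hmemρ : ∀ ρ : ℝ, ρ ∈ Set.Ioc (0:ℝ) 1 →
        (ρ:ℂ) * z ∈ Metric.closedBall (0:ℂ) ‖z‖ := by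
      intro ρ hρ
      rw [Metric.mem_closedBall, Complex.dist_eq, sub_zero,  norm_mul,
        Complex.norm_real, Real.norm_eq_abs, _root_.abs_of_pos hρ.1]
      nlinarith [norm_nonneg z, hρ.1, hρ.2]
    have hbound : ∀ ρ ∈ Set.Ioc (0:ℝ) 1, ‖u ((ρ:ℂ) * z) / ρ‖ ≤ C * ‖z‖ := by
      intro ρ hρ
      have h1 : ‖u ((ρ:ℂ) * z) - u 0‖ ≤ C * ‖(ρ:ℂ) * z - 0‖ :=
        (convex_closedBall _ _).norm_image_sub_le_of_norm_hasFDerivWithin_le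
          (f := u) (f' := u')
          (fun x hx => (hdu x (hsub hx)).hasFDerivWithinAt) hC
          (Metric.mem_closedBall_self (norm_nonneg z)) (hmemρ ρ hρ)
      have hρn : ‖ρ‖ = ρ := by rw [Real.norm_eq_abs]; exact _root_.abs_of_pos hρ.1
      rw [hu0, sub_zero, sub_zero, norm_mul, Complex.norm_real, hρn] at h1
      rw [norm_div, hρn, div_le_iff₀ hρ.1]
      calc ‖u ((ρ:ℂ) * z)‖ ≤ C * (ρ * ‖z‖) := h1
        _ = C * ‖z‖ * ρ := by ring
    rw [intervalIntegrable_iff, Set.uIoc_of_le zero_le_one]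
    apply MeasureTheory.Integrable.mono' (g := fun _ => C * ‖z‖)
      (MeasureTheory.integrable_const _)
    · apply ContinuousOn.aestronglyMeasurable ?_ measurableSet_Ioc
      apply ContinuousOn.div
      · exact hucont.comp ((by fun_prop : Continuous fun ρ : ℝ => (ρ:ℂ) * z).continuousOn)
          (fun ρ hρ => Metric.closedBall_subset_closedBall hz1.le (hmemρ ρ hρ))
      · exact continuousOn_id
      · intro ρ hρ; exact ne_of_gt hρ.1
    · filter_upwards [MeasureTheory.ae_restrict_mem measurableSet_Ioc] with ρ hρ
      exact hbound ρ hρ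
  have part1b : ∀ z ∈ D, Filter.Tendsto (fun ρ : ℝ => u ((ρ : ℂ) * z) / ρ)
      (nhdsWithin 0 (Set.Ioi 0)) (nhds (pdx u 0 * z.re + pdy u 0 * z.im)) := by
    intro z hz
    have hder : HasDerivAt (fun ρ : ℝ => u ((ρ:ℂ) * z)) (u' 0 z) 0 := by
      have h := lineDeriv_aux (v := u) (w := 0) (e := z) (t₀ := 0) (by simpa using hdu 0 h0D)
      simpa [Complex.real_smul] using h
    have hval : pdx u 0 * z.re + pdy u 0 * z.im = u' 0 z := by
      rw [pdx_eq (hdiffu 0 h0D), pdy_eq (hdiffu 0 h0D), decompR (u' 0) z]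
      simp only [hu'def, smul_eq_mul]
      ring
    rw [hval]
    rw [hasDerivAt_iff_tendsto_slope] at hder
    refine Filter.Tendsto.congr' ?_ (hder.mono_left
      (nhdsWithin_mono 0 (fun x hx => ne_of_gt hx)))
    filter_upwards [self_mem_nhdsWithin] with ρ hρ
    rw [slope_def_field]
    simp [hu0]
  -- part 2 : differentiating under the integral sign
  have hIoc : Set.uIoc (0:ℝ) 1 = Set.Ioc 0 1 := Set.uIoc_of_le zero_le_one
  have hUd : ∀ w ∈ D, ∀ e : ℂ, HasDerivAt (fun t : ℝ => U (w + t • e))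
      (∫ ρ in (0:ℝ)..1, u' ((ρ:ℂ) * w) e) 0 := by
    intro w hw e
    have hw1 : ‖w‖ < 1 := (hmemD w).mp hw
    set ε : ℝ := (1 - ‖w‖)/(‖e‖ + 1) with hεdef
    have hεpos : 0 < ε := by
      rw [hεdef]; apply div_pos (by linarith) (by positivity)
    set R' : ℝ := ‖w‖ + ε * ‖e‖ with hR'def
    have hR'1 : R' < 1 := by
      rw [hR'def, hεdef]
      have hpos : (0:ℝ) < ‖e‖ + 1 := by positivity
      have h1 : (1 - ‖w‖) / (‖e‖+1) * ‖e‖ < 1 - ‖w‖ := by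
        rw [div_mul_eq_mul_div, div_lt_iff₀ hpos]
        nlinarith [norm_nonneg e]
      linarith
    have hmemt : ∀ t : ℝ, |t| < ε → ‖w + t • e‖ ≤ R' := by
      intro t ht
      calc ‖w + t • e‖ ≤ ‖w‖ + ‖t • e‖ := norm_add_le _ _
        _ = ‖w‖ + |t| * ‖e‖ := by rw [norm_smul, Real.norm_eq_abs]
        _ ≤ R' := by rw [hR'def]; nlinarith [norm_nonneg e, abs_nonneg t]
    have hmemρt : ∀ ρ : ℝ, |ρ| ≤ 1 → ∀ t : ℝ, |t| < ε →
        (ρ:ℂ) * (w + t • e) ∈ Metric.closedBall (0:ℂ) R' := by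
      intro ρ hρ t ht
      rw [Metric.mem_closedBall, Complex.dist_eq, sub_zero,  norm_mul,
        Complex.norm_real, Real.norm_eq_abs]
      have h2 := hmemt t ht
      have h3 : (0:ℝ) ≤ R' := le_trans (norm_nonneg _) h2
      nlinarith [abs_nonneg ρ, norm_nonneg (w + t • e)]
    have hsubR' : Metric.closedBall (0:ℂ) R' ⊆ D := by
      rw [hDdef]; exact Metric.closedBall_subset_ball hR'1
    obtain ⟨C, hC⟩ : ∃ C, ∀ x ∈ Metric.closedBall (0:ℂ) R', ‖u' x‖ ≤ C :=
      (isCompact_closedBall _ _).exists_bound_of_continuousOn (hu'cont.mono hsubR')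
    have key := intervalIntegral.hasDerivAt_integral_of_dominated_loc_of_deriv_le
      (F := fun (t : ℝ) (ρ : ℝ) => u ((ρ:ℂ) * (w + t • e)) / ρ)
      (F' := fun (t : ℝ) (ρ : ℝ) => u' ((ρ:ℂ) * (w + t • e)) e)
      (a := (0:ℝ)) (b := 1) (x₀ := (0:ℝ)) (bound := fun _ => C * ‖e‖)
      (μ := MeasureTheory.volume) (Metric.ball_mem_nhds _ hεpos) ?_ ?_ ?_ ?_ ?_ ?_
    · have hfun : (fun t : ℝ => U (w + t • e))
          = fun t : ℝ => ∫ ρ in (0:ℝ)..1, u ((ρ:ℂ) * (w + t • e)) / ρ := by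
        funext t; exact hU _
      rw [hfun]
      simpa using key.2
    · filter_upwards [Metric.ball_mem_nhds 0 hεpos] with t ht
      have habs : |t| < ε := by rwa [Metric.mem_ball, Real.dist_eq, sub_zero] at ht
      rw [hIoc]
      apply ContinuousOn.aestronglyMeasurable ?_ measurableSet_Ioc
      apply ContinuousOn.div
      · exact hucont.comp ((by fun_prop : Continuous fun ρ : ℝ => (ρ:ℂ) * (w + t • e)).continuousOn)
          (fun ρ hρ => Metric.closedBall_subset_closedBall hR'1.le
            (hmemρt ρ (by rw [_root_.abs_of_pos hρ.1]; exact hρ.2) t habs))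
      · exact continuousOn_id
      · intro ρ hρ; exact ne_of_gt hρ.1
    · simpa using part1a w hw
    · rw [hIoc]
      apply ContinuousOn.aestronglyMeasurable ?_ measurableSet_Ioc
      have hp : ContinuousOn (fun ρ : ℝ => u' ((ρ:ℂ) * (w + (0:ℝ) • e))) (Set.Ioc 0 1) :=
        hu'cont.comp ((by fun_prop : Continuous fun ρ : ℝ => (ρ:ℂ) * (w + (0:ℝ) • e)).continuousOn)
          (fun ρ hρ => hsubR' (hmemρt ρ (by rw [_root_.abs_of_pos hρ.1]; exact hρ.2) 0
            (by simpa using hεpos)))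
      exact (ContinuousLinearMap.apply ℝ ℝ e).continuous.comp_continuousOn hp
    · apply Filter.Eventually.of_forall
      intro ρ hρ t ht
      have hρ' : ρ ∈ Set.Ioc (0:ℝ) 1 := by rwa [hIoc] at hρ
      have habs : |t| < ε := by rwa [Metric.mem_ball, Real.dist_eq, sub_zero] at ht
      have hmem := hmemρt ρ (by rw [_root_.abs_of_pos hρ'.1]; exact hρ'.2) t habs
      calc ‖u' ((ρ:ℂ) * (w + t • e)) e‖ ≤ ‖u' ((ρ:ℂ) * (w + t • e))‖ * ‖e‖ :=
            ContinuousLinearMap.le_opNorm _ _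
        _ ≤ C * ‖e‖ := by
            apply mul_le_mul_of_nonneg_right (hC _ hmem) (norm_nonneg e)
    · exact intervalIntegrable_const
    · apply Filter.Eventually.of_forall
      intro ρ hρ t ht
      have hρ' : ρ ∈ Set.Ioc (0:ℝ) 1 := by rwa [hIoc] at hρ
      have habs : |t| < ε := by rwa [Metric.mem_ball, Real.dist_eq, sub_zero] at ht
      have hmem : (ρ:ℂ) * (w + t • e) ∈ D :=
        hsubR' (hmemρt ρ (by rw [_root_.abs_of_pos hρ'.1]; exact hρ'.2) t habs)
      have hptfun : ∀ s : ℝ, (ρ:ℂ) * w + s • ((ρ:ℂ) * e) = (ρ:ℂ) * (w + s • e) := by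
        intro s; rw [Complex.real_smul, Complex.real_smul]; ring
      have h := lineDeriv_aux (v := u) (w := (ρ:ℂ) * w) (e := (ρ:ℂ) * e) (t₀ := t)
        (by rw [hptfun t]; exact hdu _ hmem)
      simp only [hptfun] at h
      have h2 := h.div_const ρ
      have hval : u' ((ρ:ℂ) * (w + t • e)) ((ρ:ℂ) * e) / ρ = u' ((ρ:ℂ) * (w + t • e)) e := by
        rw [show ((ρ:ℂ) * e) = ρ • e from (Complex.real_smul (x := ρ) (z := e)).symm, (u' _).map_smul,
          smul_eq_mul, mul_div_cancel_left₀ _ (ne_of_gt hρ'.1)]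
      rwa [hval] at h2
  have hVd : ∀ w ∈ D, ∀ e e' : ℂ,
      (IntervalIntegrable (fun ρ : ℝ => ρ * u'' ((ρ:ℂ) * w) e' e) MeasureTheory.volume 0 1) ∧
      HasDerivAt (fun t : ℝ => ∫ ρ in (0:ℝ)..1, u' ((ρ:ℂ) * (w + t • e')) e)
      (∫ ρ in (0:ℝ)..1, ρ * u'' ((ρ:ℂ) * w) e' e) 0 := by
    intro w hw e e'
    have hw1 : ‖w‖ < 1 := (hmemD w).mp hw
    set ε : ℝ := (1 - ‖w‖)/(‖e'‖ + 1) with hεdef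
    have hεpos : 0 < ε := by
      rw [hεdef]; apply div_pos (by linarith) (by positivity)
    set R' : ℝ := ‖w‖ + ε * ‖e'‖ with hR'def
    have hR'1 : R' < 1 := by
      rw [hR'def, hεdef]
      have hpos : (0:ℝ) < ‖e'‖ + 1 := by positivity
      have h1 : (1 - ‖w‖) / (‖e'‖+1) * ‖e'‖ < 1 - ‖w‖ := by
        rw [div_mul_eq_mul_div, div_lt_iff₀ hpos]
        nlinarith [norm_nonneg e']
      linarith
    have hmemt : ∀ t : ℝ, |t| < ε → ‖w + t • e'‖ ≤ R' := by
      intro t ht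
      calc ‖w + t • e'‖ ≤ ‖w‖ + ‖t • e'‖ := norm_add_le _ _
        _ = ‖w‖ + |t| * ‖e'‖ := by rw [norm_smul, Real.norm_eq_abs]
        _ ≤ R' := by rw [hR'def]; nlinarith [norm_nonneg e', abs_nonneg t]
    have hmemρt : ∀ ρ : ℝ, |ρ| ≤ 1 → ∀ t : ℝ, |t| < ε →
        (ρ:ℂ) * (w + t • e') ∈ Metric.closedBall (0:ℂ) R' := by
      intro ρ hρ t ht
      rw [Metric.mem_closedBall, Complex.dist_eq, sub_zero,  norm_mul,
        Complex.norm_real, Real.norm_eq_abs]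
      have h2 := hmemt t ht
      have h3 : (0:ℝ) ≤ R' := le_trans (norm_nonneg _) h2
      nlinarith [abs_nonneg ρ, norm_nonneg (w + t • e')]
    have hsubR' : Metric.closedBall (0:ℂ) R' ⊆ D := by
      rw [hDdef]; exact Metric.closedBall_subset_ball hR'1
    obtain ⟨C, hC⟩ :=
      IsCompact.exists_bound_of_continuousOn (f := u'') (isCompact_closedBall (0:ℂ) R')
        (hu''cont.mono hsubR')
    have hpathcont : ∀ t : ℝ, |t| < ε →
        ContinuousOn (fun ρ : ℝ => u' ((ρ:ℂ) * (w + t • e')) e) (Set.Icc 0 1) := by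
      intro t ht
      refine (ContinuousLinearMap.apply ℝ ℝ e).continuous.comp_continuousOn ?_
      exact hu'cont.comp ((by fun_prop : Continuous fun ρ : ℝ =>
          (ρ:ℂ) * (w + t • e')).continuousOn)
        (fun ρ hρ => hsubR' (hmemρt ρ (abs_le.mpr ⟨by linarith [hρ.1], hρ.2⟩) t ht))
    have key := intervalIntegral.hasDerivAt_integral_of_dominated_loc_of_deriv_le
      (F := fun (t : ℝ) (ρ : ℝ) => u' ((ρ:ℂ) * (w + t • e')) e)
      (F' := fun (t : ℝ) (ρ : ℝ) => ρ * u'' ((ρ:ℂ) * (w + t • e')) e' e)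
      (a := (0:ℝ)) (b := 1) (x₀ := (0:ℝ)) (bound := fun _ => C * ‖e'‖ * ‖e‖)
      (μ := MeasureTheory.volume) (Metric.ball_mem_nhds _ hεpos) ?_ ?_ ?_ ?_ ?_ ?_
    · constructor
      · simpa using key.1
      · simpa using key.2
    · filter_upwards [Metric.ball_mem_nhds 0 hεpos] with t ht
      have habs : |t| < ε := by rwa [Metric.mem_ball, Real.dist_eq, sub_zero] at ht
      rw [hIoc]
      exact ((hpathcont t habs).mono Set.Ioc_subset_Icc_self).aestronglyMeasurable
        measurableSet_Ioc
    · apply ContinuousOn.intervalIntegrable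
      rw [Set.uIcc_of_le zero_le_one]
      exact hpathcont 0 (by simpa using hεpos)
    · rw [hIoc]
      apply ContinuousOn.aestronglyMeasurable ?_ measurableSet_Ioc
      apply ContinuousOn.mul continuousOn_id
      refine (ContinuousLinearMap.apply ℝ ℝ e).continuous.comp_continuousOn ?_
      refine (ContinuousLinearMap.apply ℝ (ℂ →L[ℝ] ℝ) e').continuous.comp_continuousOn ?_
      refine (hu''cont.comp ((by fun_prop : Continuous fun ρ : ℝ =>
          (ρ:ℂ) * (w + (0:ℝ) • e')).continuousOn) ?_).mono Set.Ioc_subset_Icc_self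
      exact fun ρ hρ => hsubR' (hmemρt ρ (abs_le.mpr ⟨by linarith [hρ.1], hρ.2⟩) 0
        (by simpa using hεpos))
    · apply Filter.Eventually.of_forall
      intro ρ hρ t ht
      have hρ' : ρ ∈ Set.Ioc (0:ℝ) 1 := by rwa [hIoc] at hρ
      have habs : |t| < ε := by rwa [Metric.mem_ball, Real.dist_eq, sub_zero] at ht
      have hmem := hmemρt ρ (by rw [_root_.abs_of_pos hρ'.1]; exact hρ'.2) t habs
      have hb1 : ‖u'' ((ρ:ℂ) * (w + t • e')) e' e‖
          ≤ ‖u'' ((ρ:ℂ) * (w + t • e'))‖ * ‖e'‖ * ‖e‖ :=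
        ContinuousLinearMap.le_opNorm₂ _ _ _
      have hb2 : ‖u'' ((ρ:ℂ) * (w + t • e'))‖ ≤ C := hC _ hmem
      rw [Real.norm_eq_abs, abs_mul, _root_.abs_of_pos hρ'.1]
      have hρle : ρ ≤ 1 := hρ'.2
      have h0 : (0:ℝ) ≤ ‖e'‖ * ‖e‖ := by positivity
      calc ρ * |u'' ((ρ:ℂ) * (w + t • e')) e' e| ≤ 1 * |u'' ((ρ:ℂ) * (w + t • e')) e' e| := by
            apply mul_le_mul_of_nonneg_right hρle (abs_nonneg _)
        _ = ‖u'' ((ρ:ℂ) * (w + t • e')) e' e‖ := by rw [one_mul, Real.norm_eq_abs]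
        _ ≤ ‖u'' ((ρ:ℂ) * (w + t • e'))‖ * ‖e'‖ * ‖e‖ := hb1
        _ ≤ C * ‖e'‖ * ‖e‖ := by nlinarith [norm_nonneg e, norm_nonneg e',
            mul_le_mul_of_nonneg_right hb2 h0]
    · exact intervalIntegrable_const
    · apply Filter.Eventually.of_forall
      intro ρ hρ t ht
      have hρ' : ρ ∈ Set.Ioc (0:ℝ) 1 := by rwa [hIoc] at hρ
      have habs : |t| < ε := by rwa [Metric.mem_ball, Real.dist_eq, sub_zero] at ht
      have hmem : (ρ:ℂ) * (w + t • e') ∈ D :=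
        hsubR' (hmemρt ρ (by rw [_root_.abs_of_pos hρ'.1]; exact hρ'.2) t habs)
      have hptfun : ∀ s : ℝ, (ρ:ℂ) * w + s • ((ρ:ℂ) * e') = (ρ:ℂ) * (w + s • e') := by
        intro s; rw [Complex.real_smul, Complex.real_smul]; ring
      have h := hasDerivAt_apply_line (v := u') (w := (ρ:ℂ) * w) (e := (ρ:ℂ) * e') (e' := e)
        (t₀ := t) (by rw [hptfun t]; exact hdu' _ hmem)
      simp only [hptfun] at h
      have hval : u'' ((ρ:ℂ) * (w + t • e')) ((ρ:ℂ) * e') e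
          = ρ * u'' ((ρ:ℂ) * (w + t • e')) e' e := by
        rw [show ((ρ:ℂ) * e') = ρ • e' from (Complex.real_smul (x := ρ) (z := e')).symm,
          (u'' _).map_smul]
        simp
      rwa [hval] at h
  have part2 : ∀ z ∈ D, pdx (pdx U) z + pdy (pdy U) z = 0 := by
    have hV1 : ∀ w ∈ D, pdx U w = ∫ ρ in (0:ℝ)..1, u' ((ρ:ℂ) * w) 1 := by
      intro w hw
      have h := hUd w hw 1
      have he : (fun t : ℝ => U (w + t • (1:ℂ))) = fun t : ℝ => U (w + (t:ℂ)) := by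
        ext t; norm_num [Complex.real_smul]
      rw [he] at h
      exact h.deriv
    have hV2 : ∀ w ∈ D, pdy U w = ∫ ρ in (0:ℝ)..1, u' ((ρ:ℂ) * w) Complex.I := by
      intro w hw
      have h := hUd w hw Complex.I
      have he : (fun t : ℝ => U (w + t • Complex.I))
          = fun t : ℝ => U (w + (t:ℂ) * Complex.I) := by
        ext t; norm_num [Complex.real_smul]
      rw [he] at h
      exact h.deriv
    intro z hz
    have hx : pdx (pdx U) z = ∫ ρ in (0:ℝ)..1, ρ * u'' ((ρ:ℂ) * z) 1 1 := by
      have hev : (fun t : ℝ => pdx U (z + (t:ℂ))) =ᶠ[nhds (0:ℝ)]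
          (fun t : ℝ => ∫ ρ in (0:ℝ)..1, u' ((ρ:ℂ) * (z + (t:ℂ))) 1) := by
        filter_upwards [hmemnear z hz 1] with t ht
        exact hV1 _ (by simpa [Complex.real_smul] using ht)
      have hd1 := (hVd z hz 1 1).2
      have he1 : (fun t : ℝ => ∫ ρ in (0:ℝ)..1, u' ((ρ:ℂ) * (z + t • (1:ℂ))) 1)
          = fun t : ℝ => ∫ ρ in (0:ℝ)..1, u' ((ρ:ℂ) * (z + (t:ℂ))) 1 := by
        ext t; norm_num [Complex.real_smul]
      rw [he1] at hd1
      calc pdx (pdx U) z = deriv (fun t : ℝ => pdx U (z + (t:ℂ))) 0 := rfl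
        _ = deriv (fun t : ℝ => ∫ ρ in (0:ℝ)..1, u' ((ρ:ℂ) * (z + (t:ℂ))) 1) 0 := hev.deriv_eq
        _ = _ := hd1.deriv
    have hy : pdy (pdy U) z = ∫ ρ in (0:ℝ)..1, ρ * u'' ((ρ:ℂ) * z) Complex.I Complex.I := by
      have hev : (fun t : ℝ => pdy U (z + (t:ℂ) * Complex.I)) =ᶠ[nhds (0:ℝ)]
          (fun t : ℝ => ∫ ρ in (0:ℝ)..1, u' ((ρ:ℂ) * (z + (t:ℂ) * Complex.I)) Complex.I) := by
        filter_upwards [hmemnear z hz Complex.I] with t ht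
        exact hV2 _ (by simpa [Complex.real_smul] using ht)
      have hd1 := (hVd z hz Complex.I Complex.I).2
      have he1 : (fun t : ℝ => ∫ ρ in (0:ℝ)..1, u' ((ρ:ℂ) * (z + t • Complex.I)) Complex.I)
          = fun t : ℝ => ∫ ρ in (0:ℝ)..1, u' ((ρ:ℂ) * (z + (t:ℂ) * Complex.I)) Complex.I := by
        ext t; norm_num [Complex.real_smul]
      rw [he1] at hd1
      calc pdy (pdy U) z = deriv (fun t : ℝ => pdy U (z + (t:ℂ) * Complex.I)) 0 := rfl
        _ = deriv (fun t : ℝ =>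
              ∫ ρ in (0:ℝ)..1, u' ((ρ:ℂ) * (z + (t:ℂ) * Complex.I)) Complex.I) 0 := hev.deriv_eq
        _ = _ := hd1.deriv
    rw [hx, hy,
      ← intervalIntegral.integral_add (hVd z hz 1 1).1 (hVd z hz Complex.I Complex.I).1]
    have heq0 : Set.EqOn (fun ρ : ℝ => ρ * u'' ((ρ:ℂ) * z) 1 1
        + ρ * u'' ((ρ:ℂ) * z) Complex.I Complex.I) (fun _ => (0:ℝ))
        (Set.uIcc (0:ℝ) 1) := by
      intro ρ hρ
      have hρ' : ρ ∈ Set.Icc (0:ℝ) 1 := by rwa [Set.uIcc_of_le zero_le_one] at hρ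
      have hmem : (ρ:ℂ) * z ∈ D := by
        rw [hmemD, norm_mul, Complex.norm_real, Real.norm_eq_abs,
          _root_.abs_of_nonneg hρ'.1]
        have hz1 : ‖z‖ < 1 := (hmemD z).mp hz
        nlinarith [norm_nonneg z, hρ'.1, hρ'.2]
      have hl := hlap _ hmem
      show ρ * u'' ((ρ:ℂ) * z) 1 1 + ρ * u'' ((ρ:ℂ) * z) Complex.I Complex.I = 0
      rw [← mul_add, hl, mul_zero]
    rw [intervalIntegral.integral_congr heq0]
    simp
  refine ⟨fun z hz => ⟨part1a z hz, part1b z hz⟩, part2, ?_⟩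
  rw [hU 0]
  simp [hu0]
end
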